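/- arXiv:0907.3254 — 5 statements merged into one kernel-verified Lean document; each statement's English description precedes it below -/
import Mathlib

section
/- Let n ≥ 1 and k ≥ 2. For each j with 1 ≤ j ≤ k−1, the number of paths p in 𝒫(n−1,1,2) with p_1 = −1 that have exactly k−1 down steps in even positions, of which exactly j start on or below the x-axis, equals (1/(k−1))·C(n,k)·C(n−1,k−2); in particular this count is independent of j and equals the Narayana number N(n,k). -/
open Finset
def psum {N : ℕ} (p : Fin N → ℤ) (m : ℕ) : ℤ :=
  ∑ j ∈ Finset.univ.filter (fun j : Fin N => (j : ℕ) < m), p j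
namespace Nara
variable {N : ℕ}
def IsPM (p : Fin N → ℤ) : Prop := ∀ m, p m = 1 ∨ p m = -1
def ED (p : Fin N → ℤ) : Finset (Fin N) :=
  univ.filter (fun m => p m = -1 ∧ (m : ℕ) % 2 = 0)
def jval (p : Fin N → ℤ) : ℕ :=
  (univ.filter (fun m : Fin N => p m = -1 ∧ (m : ℕ) % 2 = 0 ∧ psum p (m:ℕ) ≤ 0)).card
def shift [NeZero N] (d : Fin N) (p : Fin N → ℤ) : Fin N → ℤ := fun m => p (m + d)

theorem psum_zero (p : Fin N → ℤ) : psum p 0 = 0 := by simp [psum]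
theorem psum_succ (p : Fin N → ℤ) {m : ℕ} (hm : m < N) :
    psum p (m + 1) = psum p m + p ⟨m, hm⟩ := by
  unfold psum
  rw [show (univ.filter (fun j : Fin N => (j:ℕ) < m + 1))
      = insert ⟨m, hm⟩ (univ.filter (fun j : Fin N => (j:ℕ) < m)) by
    ext j
    simp only [mem_insert, mem_filter, mem_univ, true_and, Fin.ext_iff]
    omega]
  rw [sum_insert (by simp)]
  ring

theorem shift_zero [NeZero N] (p : Fin N → ℤ) : shift 0 p = p := by
  funext m; simp [shift]

theorem shift_shift [NeZero N] (p : Fin N → ℤ) (d e : Fin N) :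
    shift e (shift d p) = shift (d + e) p := by
  funext m; simp only [shift]
  congr 1; rw [add_comm d e, ← add_assoc]

theorem shift_neg [NeZero N] (p : Fin N → ℤ) (d : Fin N) :
    shift (-d) (shift d p) = p := by
  rw [shift_shift, add_neg_cancel, shift_zero]

theorem isPM_shift [NeZero N] {p : Fin N → ℤ} (h : IsPM p) (d : Fin N) :
    IsPM (shift d p) := fun m => h (m + d)

theorem card_filter_shift [NeZero N] (p : Fin N → ℤ) (d : Fin N) (Q : ℤ → Prop)
    [DecidablePred Q] :
    (univ.filter (fun m => Q (shift d p m))).card = (univ.filter (fun m => Q (p m))).card := by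
  apply Finset.card_nbij' (i := fun m => m + d) (j := fun m => m - d)
  · intro a ha; simp only [mem_coe, mem_filter, mem_univ, true_and] at *; exact ha
  · intro a ha; simp only [mem_coe, mem_filter, mem_univ, true_and] at *
    simpa [shift, sub_add_cancel] using ha
  · intro a _; simp
  · intro a _; simp

theorem mem_ED_shift [NeZero N] (hN : N % 2 = 0) {p : Fin N → ℤ} {d : Fin N}
    (hd : (d : ℕ) % 2 = 0) (m : Fin N) :
    m ∈ ED (shift d p) ↔ m + d ∈ ED p := by
  rw [ED, ED, mem_filter, mem_filter]
  simp only [mem_univ, true_and, shift]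
  have hlt : (m:ℕ) < N := m.2
  have hdlt : (d:ℕ) < N := d.2
  have hmod : (((m:ℕ)+(d:ℕ)) % N = (m:ℕ)+(d:ℕ) ∧ (m:ℕ)+(d:ℕ) < N) ∨
      (((m:ℕ)+(d:ℕ)) % N = (m:ℕ)+(d:ℕ) - N ∧ N ≤ (m:ℕ)+(d:ℕ)) := by
    rcases lt_or_ge ((m:ℕ)+(d:ℕ)) N with h|h
    · exact Or.inl ⟨Nat.mod_eq_of_lt h, h⟩
    · refine Or.inr ⟨?_, h⟩
      rw [Nat.mod_eq_sub_mod h, Nat.mod_eq_of_lt (by omega)]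
  constructor
  · rintro ⟨h1, h2⟩
    refine ⟨h1, ?_⟩
    rw [Fin.val_add]
    omega
  · rintro ⟨h1, h2⟩
    refine ⟨h1, ?_⟩
    rw [Fin.val_add] at h2
    omega

theorem card_ED_shift [NeZero N] (hN : N % 2 = 0) {p : Fin N → ℤ} {d : Fin N}
    (hd : (d : ℕ) % 2 = 0) : (ED (shift d p)).card = (ED p).card := by
  apply Finset.card_nbij (i := fun m => m + d)
  · intro a ha
    exact (mem_ED_shift hN hd a).mp ha
  · intro a ha b hb hab
    simpa using congrArg (· - d) hab
  · intro a ha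
    refine ⟨a - d, ?_, by simp⟩
    simp only [Finset.mem_coe] at ha ⊢
    rw [mem_ED_shift hN hd, sub_add_cancel]
    exact ha

theorem psum_shift [NeZero N] (p : Fin N → ℤ) (d : Fin N) :
    ∀ m : ℕ, m ≤ N →
    psum (shift d p) m = psum p (min (m + (d:ℕ)) N) - psum p (d:ℕ) + psum p (m + (d:ℕ) - N) := by
  intro m
  induction m with
  | zero =>
    intro _
    have h1 : min (0 + (d:ℕ)) N = (d:ℕ) := by
      have := d.2; omega
    have h2 : 0 + (d:ℕ) - N = 0 := by have := d.2; omega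
    rw [h1, h2, psum_zero, psum_zero]; ring
  | succ m ih =>
    intro hm
    have hmN : m < N := by omega
    have hdN : (d:ℕ) < N := d.2
    rw [psum_succ _ hmN, ih (by omega)]
    have hval : ((⟨m, hmN⟩ + d : Fin N) : ℕ) = (m + (d:ℕ)) % N := by
      rw [Fin.val_add]
    by_cases hc : m + (d:ℕ) < N
    · have h1 : min (m + (d:ℕ)) N = m + (d:ℕ) := by omega
      have h2 : min (m + 1 + (d:ℕ)) N = m + 1 + (d:ℕ) := by omega
      have h3 : m + (d:ℕ) - N = 0 := by omega
      have h4 : m + 1 + (d:ℕ) - N = 0 := by omega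
      rw [h1, h2, h3, h4, show m + 1 + (d:ℕ) = (m + (d:ℕ)) + 1 by ring, psum_succ _ hc]
      have : (shift d p) ⟨m, hmN⟩ = p ⟨m + (d:ℕ), hc⟩ := by
        simp only [shift]; congr 1; ext; rw [hval]; exact Nat.mod_eq_of_lt hc
      rw [this]; ring
    · have h1 : min (m + (d:ℕ)) N = N := by omega
      have h2 : min (m + 1 + (d:ℕ)) N = N := by omega
      have h5 : m + (d:ℕ) - N < N := by omega
      have h3 : m + 1 + (d:ℕ) - N = (m + (d:ℕ) - N) + 1 := by omega
      rw [h1, h2, h3, psum_succ _ h5]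
      have : (shift d p) ⟨m, hmN⟩ = p ⟨m + (d:ℕ) - N, h5⟩ := by
        simp only [shift]; congr 1; ext; rw [hval]
        show (m + (d:ℕ)) % N = m + (d:ℕ) - N
        rw [Nat.mod_eq_sub_mod (by omega), Nat.mod_eq_of_lt h5]
      rw [this]; ring

theorem psum_parity {p : Fin N → ℤ} (h : IsPM p) :
    ∀ m, m ≤ N → psum p m % 2 = (m : ℤ) % 2 := by
  intro m
  induction m with
  | zero => intro _; simp [psum_zero]
  | succ m ih =>
    intro hm
    have hmN : m < N := by omega
    rw [psum_succ _ hmN]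
    have := ih (by omega)
    rcases h ⟨m, hmN⟩ with h1 | h1 <;> rw [h1] <;> push_cast <;> omega

theorem sum_pm {p : Fin N → ℤ} (h : IsPM p) :
    ∑ j, p j = ((univ.filter (fun m => p m = 1)).card : ℤ)
      - ((univ.filter (fun m => p m = -1)).card : ℤ) := by
  rw [← Finset.sum_filter_add_sum_filter_not univ (fun m => p m = 1)]
  have e1 : ∑ j ∈ univ.filter (fun m => p m = 1), p j
      = ((univ.filter (fun m => p m = 1)).card : ℤ) := by
    rw [Finset.sum_congr rfl (fun x hx => (Finset.mem_filter.mp hx).2)]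
    simp
  have e2 : ∑ j ∈ univ.filter (fun m => ¬ p m = 1), p j
      = -((univ.filter (fun m => ¬ p m = 1)).card : ℤ) := by
    have hall : ∀ x ∈ univ.filter (fun m => ¬ p m = 1), p x = -1 := by
      intro x hx
      rcases h x with h1 | h1
      · exact absurd h1 (Finset.mem_filter.mp hx).2
      · exact h1
    rw [Finset.sum_congr rfl hall]
    simp
  have e3 : (univ.filter (fun m => ¬ p m = 1)) = (univ.filter (fun m => p m = -1)) := by
    apply Finset.filter_congr
    intro x _
    rcases h x with h1 | h1 <;> simp [h1]
  rw [e1, e2, e3]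
  ring

theorem card_pm {p : Fin N → ℤ} (h : IsPM p) :
    (univ.filter (fun m => p m = 1)).card + (univ.filter (fun m => p m = -1)).card = N := by
  have e3 : (univ.filter (fun m => p m = -1)) = (univ.filter (fun m => ¬ p m = 1)) := by
    apply Finset.filter_congr
    intro x _
    rcases h x with h1 | h1 <;> simp [h1]
  rw [e3, Finset.card_filter_add_card_filter_not]
  simp

def gkey (p : Fin N → ℤ) (e : Fin N) : ℤ ×ₗ ℤ := toLex (psum p (e:ℕ), -(e:ℤ))

def g (p : Fin N → ℤ) (d : Fin N) : ℕ :=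
  ((ED p).filter (fun e => gkey p e ≤ gkey p d)).card

theorem gkey_le_iff (p : Fin N → ℤ) (e d : Fin N) :
    gkey p e ≤ gkey p d ↔ psum p (e:ℕ) < psum p (d:ℕ)
      ∨ (psum p (e:ℕ) = psum p (d:ℕ) ∧ (d:ℕ) ≤ (e:ℕ)) := by
  rw [gkey, gkey, Prod.Lex.le_iff, ofLex_toLex, ofLex_toLex]
  constructor
  · rintro (h | ⟨h1, h2⟩)
    · exact Or.inl h
    · right; refine ⟨h1, ?_⟩; omega
  · rintro (h | ⟨h1, h2⟩)
    · exact Or.inl h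
    · right; refine ⟨h1, ?_⟩; omega

theorem g_injOn {p : Fin N → ℤ} {d d' : Fin N} (hd : d ∈ ED p) (hd' : d' ∈ ED p)
    (h : g p d = g p d') : d = d' := by
  have key : ∀ a b : Fin N, a ∈ ED p → b ∈ ED p → gkey p a < gkey p b → g p a < g p b := by
    intro a b ha hb hab
    apply Finset.card_lt_card
    rw [Finset.ssubset_iff_of_subset]
    · exact ⟨b, Finset.mem_filter.mpr ⟨hb, le_refl _⟩, fun hc =>
        absurd ((Finset.mem_filter.mp hc).2) (not_le.mpr hab)⟩
    · intro x hx
      rw [Finset.mem_filter] at hx ⊢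
      exact ⟨hx.1, le_trans hx.2 (le_of_lt hab)⟩
  rcases lt_trichotomy (gkey p d) (gkey p d') with hlt | heq | hgt
  · exact absurd h (Nat.ne_of_lt (key _ _ hd hd' hlt))
  · have := congrArg ofLex heq
    have h2 : -(d:ℤ) = -(d':ℤ) := congrArg Prod.snd this
    ext
    omega
  · exact absurd h.symm (Nat.ne_of_lt (key _ _ hd' hd hgt))

theorem g_ge_one {p : Fin N → ℤ} {d : Fin N} (hd : d ∈ ED p) : 1 ≤ g p d := by
  rw [Nat.one_le_iff_ne_zero, ← Nat.pos_iff_ne_zero, g, Finset.card_pos]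
  exact ⟨d, Finset.mem_filter.mpr ⟨hd, le_refl _⟩⟩

theorem g_le_card {p : Fin N → ℤ} (d : Fin N) : g p d ≤ (ED p).card :=
  Finset.card_le_card (Finset.filter_subset _ _)

theorem g_bij {p : Fin N → ℤ} {j : ℕ} (hj1 : 1 ≤ j) (hj2 : j ≤ (ED p).card) :
    ∃! d, d ∈ ED p ∧ g p d = j := by
  have himg : (ED p).image (g p) = Finset.Icc 1 (ED p).card := by
    apply Finset.eq_of_subset_of_card_le
    · intro x hx
      rw [Finset.mem_image] at hx
      obtain ⟨d, hd, rfl⟩ := hx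
      rw [Finset.mem_Icc]
      exact ⟨g_ge_one hd, g_le_card d⟩
    · rw [Nat.card_Icc]
      rw [Finset.card_image_of_injOn (fun a ha b hb hab => g_injOn ha hb hab)]
      omega
  have hjmem : j ∈ (ED p).image (g p) := by
    rw [himg, Finset.mem_Icc]; exact ⟨hj1, hj2⟩
  rw [Finset.mem_image] at hjmem
  obtain ⟨d, hd, hgd⟩ := hjmem
  exact ⟨d, ⟨hd, hgd⟩, fun d' ⟨hd', hgd'⟩ => g_injOn hd' hd (hgd'.trans hgd.symm)⟩


theorem jval_eq (p : Fin N → ℤ) :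
    jval p = ((ED p).filter (fun m : Fin N => psum p (m:ℕ) ≤ 0)).card := by
  rw [jval, ED, Finset.filter_filter]
  congr 1
  ext m
  simp only [Finset.mem_filter, Finset.mem_univ, true_and]
  tauto

theorem psum_shift_le_iff [NeZero N] (hN : N % 2 = 0) {p : Fin N → ℤ} (hpm : IsPM p)
    (htot : psum p N = 2) {d : Fin N} (hd : d ∈ ED p) {m : Fin N}
    (hm : m ∈ ED (shift d p)) :
    psum (shift d p) (m:ℕ) ≤ 0 ↔ gkey p (m + d) ≤ gkey p d := by
  have hdP : p d = -1 ∧ (d:ℕ) % 2 = 0 := by simpa [ED] using hd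
  have hmP : (shift d p) m = -1 ∧ (m:ℕ) % 2 = 0 := by simpa [ED] using hm
  have hmdP : p (m+d) = -1 ∧ ((m+d : Fin N):ℕ) % 2 = 0 := by
    simpa [ED] using (mem_ED_shift hN hdP.2 m).mp hm
  have hps := psum_shift p d (m:ℕ) (le_of_lt m.2)
  have hmlt : (m:ℕ) < N := m.2
  have hdlt : (d:ℕ) < N := d.2
  have hpard : psum p (d:ℕ) % 2 = 0 := by
    have := psum_parity hpm (d:ℕ) (le_of_lt hdlt)
    omega
  rcases lt_or_ge ((m:ℕ) + (d:ℕ)) N with hc | hc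
  · have hval : ((m+d : Fin N):ℕ) = (m:ℕ) + (d:ℕ) := by
      rw [Fin.val_add, Nat.mod_eq_of_lt hc]
    rw [min_eq_left (by omega), Nat.sub_eq_zero_of_le (by omega), psum_zero] at hps
    rw [gkey_le_iff, hval, hps]
    omega
  · have hval : ((m+d : Fin N):ℕ) = (m:ℕ) + (d:ℕ) - N := by
      rw [Fin.val_add, Nat.mod_eq_sub_mod hc, Nat.mod_eq_of_lt (by omega)]
    rw [min_eq_right (by omega), htot] at hps
    have hparm : psum p ((m:ℕ) + (d:ℕ) - N) % 2 = 0 := by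
      have h2 := psum_parity hpm ((m:ℕ) + (d:ℕ) - N) (by omega)
      have h3 := hmdP.2
      rw [hval] at h3
      omega
    rw [gkey_le_iff, hval, hps]
    omega

theorem jval_shift [NeZero N] (hN : N % 2 = 0) {p : Fin N → ℤ} (hpm : IsPM p)
    (htot : psum p N = 2) {d : Fin N} (hd : d ∈ ED p) :
    jval (shift d p) = g p d := by
  rw [jval_eq, g]
  apply Finset.card_nbij (i := fun m => m + d)
  · intro a ha
    simp only [Finset.mem_coe, Finset.mem_filter] at ha ⊢
    exact ⟨(mem_ED_shift hN (by simpa [ED] using hd : p d = -1 ∧ (d:ℕ) % 2 = 0).2 a).mp ha.1,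
      (psum_shift_le_iff hN hpm htot hd ha.1).mp ha.2⟩
  · intro a _ b _ hab
    simpa using congrArg (· - d) hab
  · intro e he
    refine ⟨e - d, ?_, by simp⟩
    simp only [Finset.mem_coe, Finset.mem_filter] at he ⊢
    have hmem : e - d ∈ ED (shift d p) := by
      rw [mem_ED_shift hN (by simpa [ED] using hd : p d = -1 ∧ (d:ℕ) % 2 = 0).2, sub_add_cancel]
      exact he.1
    refine ⟨hmem, ?_⟩
    rw [psum_shift_le_iff hN hpm htot hd hmem, sub_add_cancel]
    exact he.2


def toPath {N : ℕ} (q : Finset (Fin N)) : Fin N → ℤ := fun m => if m ∈ q then -1 else 1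

def dset {N : ℕ} (p : Fin N → ℤ) : Finset (Fin N) := univ.filter (fun m => p m = -1)

theorem isPM_toPath {N : ℕ} (q : Finset (Fin N)) : IsPM (toPath q) := by
  intro m
  unfold toPath
  by_cases h : m ∈ q <;> simp [h]

theorem toPath_dset {N : ℕ} {p : Fin N → ℤ} (h : IsPM p) : toPath (dset p) = p := by
  funext m
  unfold toPath dset
  rcases h m with h1 | h1 <;> simp [h1]

theorem dset_toPath {N : ℕ} (q : Finset (Fin N)) : dset (toPath q) = q := by
  ext m
  unfold dset toPath
  by_cases h : m ∈ q <;> simp [h]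

theorem card_evens (n : ℕ) :
    ((univ : Finset (Fin (2*n))).filter (fun m : Fin (2*n) => (m:ℕ) % 2 = 0)).card = n := by
  have key : ((univ : Finset (Fin (2*n))).filter (fun m : Fin (2*n) => (m:ℕ) % 2 = 0)).card
      = (univ : Finset (Fin n)).card := by
    refine Finset.card_nbij' (fun m => (⟨(m:ℕ)/2, by have := m.2; omega⟩ : Fin n))
      (fun i => (⟨2*(i:ℕ), by have := i.2; omega⟩ : Fin (2*n))) ?_ ?_ ?_ ?_
    · intro a _; exact Finset.mem_univ _
    · intro a _
      simp only [Finset.mem_coe, Finset.mem_filter, Finset.mem_univ, true_and]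
      omega
    · intro a ha
      simp only [Finset.mem_coe, Finset.mem_filter, Finset.mem_univ, true_and] at ha
      ext
      simp only [Fin.val_mk]
      omega
    · intro a _
      ext
      simp only [Fin.val_mk]
      omega
  rw [key]
  simp

theorem card_odds (n : ℕ) :
    ((univ : Finset (Fin (2*n))).filter (fun m : Fin (2*n) => ¬ (m:ℕ) % 2 = 0)).card = n := by
  have h := Finset.card_filter_add_card_filter_not
    (s := (univ : Finset (Fin (2*n)))) (p := fun m : Fin (2*n) => (m:ℕ) % 2 = 0)
  rw [card_evens] at h
  simp only [Finset.card_univ, Fintype.card_fin] at h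
  omega


instance instNeZero2n {n : ℕ} [NeZero n] : NeZero (2*n) := ⟨by have := NeZero.ne n; omega⟩

def Sdown (n k : ℕ) [NeZero n] : Finset (Finset (Fin (2*n))) :=
  univ.filter (fun q => q.card = n-1 ∧ (0 : Fin (2*n)) ∈ q
    ∧ (q.filter (fun m : Fin (2*n) => (m:ℕ) % 2 = 0)).card = k-1)

theorem val_zero_2n {n : ℕ} [NeZero n] : ((0 : Fin (2*n)) : ℕ) = 0 := Fin.val_zero _

theorem card_Sdown {n k : ℕ} [NeZero n] (hk : 2 ≤ k) :
    (Sdown n k).card = Nat.choose n k * Nat.choose (n-1) (k-2) := by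
  have hn : 1 ≤ n := Nat.one_le_iff_ne_zero.mpr (NeZero.ne n)
  rcases le_or_gt k n with hkn | hkn
  · -- main case
    have key : (Sdown n k).card =
        ((Finset.powersetCard (k-2) ((univ.filter (fun m : Fin (2*n) => (m:ℕ) % 2 = 0)).erase 0)) ×ˢ
         (Finset.powersetCard (n-k) (univ.filter (fun m : Fin (2*n) => ¬ (m:ℕ) % 2 = 0)))).card := by
      refine Finset.card_nbij'
        (fun q => ((q.filter (fun m : Fin (2*n) => (m:ℕ) % 2 = 0)).erase 0,
                   q.filter (fun m : Fin (2*n) => ¬ (m:ℕ) % 2 = 0)))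
        (fun AB => insert 0 AB.1 ∪ AB.2) ?_ ?_ ?_ ?_
      · intro q hq
        simp only [Sdown, Finset.mem_coe, Finset.mem_filter, Finset.mem_univ, true_and] at hq
        obtain ⟨hc, h0, he⟩ := hq
        have h0f : (0 : Fin (2*n)) ∈ q.filter (fun m : Fin (2*n) => (m:ℕ) % 2 = 0) := by
          rw [Finset.mem_filter]
          exact ⟨h0, by rw [val_zero_2n]⟩
        have hsplit := Finset.card_filter_add_card_filter_not
          (s := q) (p := fun m : Fin (2*n) => (m:ℕ) % 2 = 0)
        simp only [Finset.mem_coe, Finset.mem_product, Finset.mem_powersetCard]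
        refine ⟨⟨?_, ?_⟩, ?_, ?_⟩
        · exact Finset.erase_subset_erase _ (Finset.filter_subset_filter _ (Finset.subset_univ q))
        · rw [Finset.card_erase_of_mem h0f, he]
          omega
        · exact Finset.filter_subset_filter _ (Finset.subset_univ q)
        · omega
      · rintro ⟨A, B⟩ hAB
        simp only [Finset.mem_coe, Finset.mem_product, Finset.mem_powersetCard] at hAB
        obtain ⟨⟨hA, hAc⟩, hB, hBc⟩ := hAB
        have h0A : (0 : Fin (2*n)) ∉ A := fun h => (Finset.mem_erase.mp (hA h)).1 rfl
        have hAev : ∀ x ∈ A, (x:ℕ) % 2 = 0 := fun x hx =>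
          (Finset.mem_filter.mp (Finset.mem_of_mem_erase (hA hx))).2
        have hBod : ∀ x ∈ B, ¬ (x:ℕ) % 2 = 0 := fun x hx => (Finset.mem_filter.mp (hB hx)).2
        have hdisj : Disjoint (insert 0 A) B := by
          rw [Finset.disjoint_left]
          intro x hx hxB
          rcases Finset.mem_insert.mp hx with rfl | hxA
          · exact hBod _ hxB (by rw [val_zero_2n])
          · exact hBod _ hxB (hAev _ hxA)
        simp only [Sdown, Finset.mem_coe, Finset.mem_filter, Finset.mem_univ, true_and]
        have hfe : (insert 0 A ∪ B).filter (fun m : Fin (2*n) => (m:ℕ) % 2 = 0) = insert 0 A := by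
          ext x
          simp only [Finset.mem_filter, Finset.mem_union, Finset.mem_insert]
          constructor
          · rintro ⟨(h | h) | h, hev⟩
            · exact Or.inl h
            · exact Or.inr h
            · exact absurd hev (hBod _ h)
          · rintro (rfl | h)
            · exact ⟨Or.inl (Or.inl rfl), by rw [val_zero_2n]⟩
            · exact ⟨Or.inl (Or.inr h), hAev _ h⟩
        refine ⟨?_, ?_, ?_⟩
        · rw [Finset.card_union_of_disjoint hdisj, Finset.card_insert_of_notMem h0A, hAc, hBc]
          omega
        · exact Finset.mem_union_left _ (Finset.mem_insert_self _ _)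
        · rw [hfe, Finset.card_insert_of_notMem h0A, hAc]
          omega
      · intro q hq
        simp only [Sdown, Finset.mem_coe, Finset.mem_filter, Finset.mem_univ, true_and] at hq
        obtain ⟨hc, h0, he⟩ := hq
        have h0f : (0 : Fin (2*n)) ∈ q.filter (fun m : Fin (2*n) => (m:ℕ) % 2 = 0) := by
          rw [Finset.mem_filter]
          exact ⟨h0, by rw [val_zero_2n]⟩
        simp only
        rw [Finset.insert_erase h0f, Finset.filter_union_filter_not_eq]
      · rintro ⟨A, B⟩ hAB
        simp only [Finset.mem_coe, Finset.mem_product, Finset.mem_powersetCard] at hAB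
        obtain ⟨⟨hA, hAc⟩, hB, hBc⟩ := hAB
        have h0A : (0 : Fin (2*n)) ∉ A := fun h => (Finset.mem_erase.mp (hA h)).1 rfl
        have hAev : ∀ x ∈ A, (x:ℕ) % 2 = 0 := fun x hx =>
          (Finset.mem_filter.mp (Finset.mem_of_mem_erase (hA hx))).2
        have hBod : ∀ x ∈ B, ¬ (x:ℕ) % 2 = 0 := fun x hx => (Finset.mem_filter.mp (hB hx)).2
        have hfe : (insert 0 A ∪ B).filter (fun m : Fin (2*n) => (m:ℕ) % 2 = 0) = insert 0 A := by
          ext x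
          simp only [Finset.mem_filter, Finset.mem_union, Finset.mem_insert]
          constructor
          · rintro ⟨(h | h) | h, hev⟩
            · exact Or.inl h
            · exact Or.inr h
            · exact absurd hev (hBod _ h)
          · rintro (rfl | h)
            · exact ⟨Or.inl (Or.inl rfl), by rw [val_zero_2n]⟩
            · exact ⟨Or.inl (Or.inr h), hAev _ h⟩
        have hfo : (insert 0 A ∪ B).filter (fun m : Fin (2*n) => ¬ (m:ℕ) % 2 = 0) = B := by
          ext x
          simp only [Finset.mem_filter, Finset.mem_union, Finset.mem_insert]
          constructor
          · rintro ⟨(h | h) | h, hev⟩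
            · exact absurd (by rw [h, val_zero_2n]) hev
            · exact absurd (hAev _ h) hev
            · exact h
          · intro h
            exact ⟨Or.inr h, hBod _ h⟩
        simp only
        rw [hfe, hfo, Finset.erase_insert h0A]
    have h0e : (0 : Fin (2*n)) ∈ univ.filter (fun m : Fin (2*n) => (m:ℕ) % 2 = 0) := by
      rw [Finset.mem_filter]
      exact ⟨Finset.mem_univ _, by rw [val_zero_2n]⟩
    rw [key, Finset.card_product, Finset.card_powersetCard, Finset.card_powersetCard,
        Finset.card_erase_of_mem h0e, card_evens, card_odds, Nat.choose_symm hkn]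
    ring
  · have hempty : Sdown n k = ∅ := by
      rw [Finset.eq_empty_iff_forall_notMem]
      intro q hq
      simp only [Sdown, Finset.mem_filter, Finset.mem_univ, true_and] at hq
      obtain ⟨hc, h0, he⟩ := hq
      have hle := Finset.card_filter_le q (fun m : Fin (2*n) => (m:ℕ) % 2 = 0)
      omega
    rw [hempty, Finset.card_empty, Nat.choose_eq_zero_of_lt hkn, Nat.zero_mul]

theorem psum_N {N : ℕ} (p : Fin N → ℤ) : psum p N = ∑ j, p j := by
  unfold psum
  rw [Finset.filter_true_of_mem]
  intro j _; exact j.2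

theorem toPath_eq_neg_one_iff {N : ℕ} (q : Finset (Fin N)) (m : Fin N) :
    toPath q m = -1 ↔ m ∈ q := by
  unfold toPath
  by_cases h : m ∈ q <;> simp [h]

theorem toPath_eq_one_iff {N : ℕ} (q : Finset (Fin N)) (m : Fin N) :
    toPath q m = 1 ↔ m ∉ q := by
  unfold toPath
  by_cases h : m ∈ q <;> simp [h]

theorem ED_toPath {N : ℕ} (q : Finset (Fin N)) :
    ED (toPath q) = q.filter (fun m : Fin N => (m:ℕ) % 2 = 0) := by
  ext m
  simp only [ED, Finset.mem_filter, Finset.mem_univ, true_and, toPath_eq_neg_one_iff]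

theorem up_card_toPath {N : ℕ} (q : Finset (Fin N)) :
    (univ.filter (fun m => toPath q m = 1)).card = N - q.card := by
  have h : univ.filter (fun m => toPath q m = 1) = qᶜ := by
    ext m
    simp [toPath_eq_one_iff]
  rw [h, Finset.card_compl]
  simp

theorem mem_Sdown_iff {n k : ℕ} [NeZero n] {q : Finset (Fin (2*n))} :
    q ∈ Sdown n k ↔ ((univ.filter (fun m => toPath q m = 1)).card = n+1
      ∧ toPath q 0 = -1 ∧ (ED (toPath q)).card = k-1) := by
  have hn : 1 ≤ n := Nat.one_le_iff_ne_zero.mpr (NeZero.ne n)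
  have hqle : q.card ≤ 2*n := by
    have := Finset.card_le_card (Finset.subset_univ q)
    simpa using this
  rw [Sdown, Finset.mem_filter, up_card_toPath, toPath_eq_neg_one_iff, ED_toPath]
  constructor
  · rintro ⟨-, h1, h2, h3⟩
    exact ⟨by omega, h2, h3⟩
  · rintro ⟨h1, h2, h3⟩
    exact ⟨Finset.mem_univ _, by omega, h2, h3⟩

theorem tot_Sdown {n k : ℕ} [NeZero n] {q : Finset (Fin (2*n))} (hq : q ∈ Sdown n k) :
    psum (toPath q) (2*n) = 2 := by
  have hn : 1 ≤ n := Nat.one_le_iff_ne_zero.mpr (NeZero.ne n)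
  rw [psum_N, sum_pm (isPM_toPath q)]
  have h1 := card_pm (isPM_toPath q)
  have h2 := (mem_Sdown_iff.mp hq).1
  rw [h2] at h1 ⊢
  have h3 : (univ.filter (fun m => toPath q m = -1)).card = n - 1 := by omega
  rw [h3]
  omega

theorem zero_mem_ED {n k : ℕ} [NeZero n] {q : Finset (Fin (2*n))} (hq : q ∈ Sdown n k) :
    (0 : Fin (2*n)) ∈ ED (toPath q) := by
  rw [ED, Finset.mem_filter]
  exact ⟨Finset.mem_univ _, (mem_Sdown_iff.mp hq).2.1, by rw [val_zero_2n]⟩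

theorem shift_mem_Sdown {n k : ℕ} [NeZero n] {q : Finset (Fin (2*n))} (hq : q ∈ Sdown n k)
    {d : Fin (2*n)} (hd : d ∈ ED (toPath q)) :
    dset (shift d (toPath q)) ∈ Sdown n k := by
  have hdP : toPath q d = -1 ∧ (d:ℕ) % 2 = 0 := by
    have := hd
    rw [ED, Finset.mem_filter] at this
    exact this.2
  have hN : (2*n) % 2 = 0 := by omega
  rw [mem_Sdown_iff, toPath_dset (isPM_shift (isPM_toPath q) d)]
  obtain ⟨h1, h2, h3⟩ := mem_Sdown_iff.mp hq
  refine ⟨?_, ?_, ?_⟩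
  · rw [← h1]
    exact card_filter_shift (toPath q) d (fun z => z = 1)
  · show toPath q (0 + d) = -1
    rw [zero_add]
    exact hdP.1
  · rw [card_ED_shift hN hdP.2]
    exact h3

theorem jval_shift_Sdown {n k : ℕ} [NeZero n] {q : Finset (Fin (2*n))} (hq : q ∈ Sdown n k)
    {d : Fin (2*n)} (hd : d ∈ ED (toPath q)) :
    jval (shift d (toPath q)) = g (toPath q) d :=
  jval_shift (by omega) (isPM_toPath q) (tot_Sdown hq) hd


def SJdown (n k j : ℕ) [NeZero n] : Finset (Finset (Fin (2*n))) :=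
  (Sdown n k).filter (fun q => jval (toPath q) = j)

def REL {n : ℕ} [NeZero n] (q r : Finset (Fin (2*n))) : Prop :=
  ∃ d ∈ ED (toPath q), toPath r = shift d (toPath q)

instance REL.dec {n : ℕ} [NeZero n] (q r : Finset (Fin (2*n))) : Decidable (REL q r) := by
  unfold REL
  infer_instance

theorem ED_even {N : ℕ} {p : Fin N → ℤ} {d : Fin N} (hd : d ∈ ED p) :
    p d = -1 ∧ (d:ℕ) % 2 = 0 := by
  rw [ED, Finset.mem_filter] at hd
  exact hd.2

theorem count1 {n k j : ℕ} [NeZero n] (hj1 : 1 ≤ j) (hj2 : j ≤ k-1)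
    {q : Finset (Fin (2*n))} (hq : q ∈ Sdown n k) :
    ((SJdown n k j).filter (fun r => REL q r)).card = 1 := by
  have hED : (ED (toPath q)).card = k-1 := (mem_Sdown_iff.mp hq).2.2
  obtain ⟨d, ⟨hd, hgd⟩, huniq⟩ := g_bij (p := toPath q) hj1 (by rw [hED]; exact hj2)
  rw [Finset.card_eq_one]
  refine ⟨dset (shift d (toPath q)), ?_⟩
  ext r
  simp only [Finset.mem_filter, Finset.mem_singleton]
  constructor
  · rintro ⟨hrS, hrel⟩
    obtain ⟨d', hd', hr⟩ := hrel
    have hj' : jval (toPath r) = j := (Finset.mem_filter.mp hrS).2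
    rw [hr, jval_shift_Sdown hq hd'] at hj'
    have hdd : d' = d := huniq d' ⟨hd', hj'⟩
    rw [← dset_toPath r, hr, hdd]
  · rintro rfl
    refine ⟨?_, d, hd, toPath_dset (isPM_shift (isPM_toPath q) d)⟩
    rw [SJdown, Finset.mem_filter]
    refine ⟨shift_mem_Sdown hq hd, ?_⟩
    rw [toPath_dset (isPM_shift (isPM_toPath q) d), jval_shift_Sdown hq hd, hgd]

theorem count2 {n k j : ℕ} [NeZero n]
    {r : Finset (Fin (2*n))} (hr : r ∈ SJdown n k j) :
    ((Sdown n k).filter (fun q => REL q r)).card = k-1 := by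
  have hN : (2*n) % 2 = 0 := by omega
  have hrS : r ∈ Sdown n k := (Finset.mem_filter.mp hr).1
  have himg : (Sdown n k).filter (fun q => REL q r)
      = (ED (toPath r)).image (fun e => dset (shift e (toPath r))) := by
    ext q'
    simp only [Finset.mem_filter, Finset.mem_image]
    constructor
    · rintro ⟨hq', hrel⟩
      obtain ⟨d, hd, hre⟩ := hrel
      refine ⟨-d, ?_, ?_⟩
      · rw [hre, mem_ED_shift hN (ED_even hd).2, neg_add_cancel]
        exact zero_mem_ED hq'
      · rw [hre, shift_neg]
        exact dset_toPath q' 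
    · rintro ⟨e, he, rfl⟩
      refine ⟨shift_mem_Sdown hrS he, -e, ?_, ?_⟩
      · rw [toPath_dset (isPM_shift (isPM_toPath r) e), mem_ED_shift hN (ED_even he).2,
          neg_add_cancel]
        exact zero_mem_ED hrS
      · rw [toPath_dset (isPM_shift (isPM_toPath r) e), shift_neg]
  rw [himg, Finset.card_image_of_injOn, (mem_Sdown_iff.mp hrS).2.2]
  intro e he e' he' heq
  simp only [Finset.mem_coe] at he he'
  have hshift : shift e (toPath r) = shift e' (toPath r) := by
    have h2 := congrArg toPath heq
    rwa [toPath_dset (isPM_shift (isPM_toPath r) e),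
      toPath_dset (isPM_shift (isPM_toPath r) e')] at h2
  apply g_injOn he he'
  rw [← jval_shift_Sdown hrS he, ← jval_shift_Sdown hrS he', hshift]

theorem cardA {n k j : ℕ} [NeZero n] (hj1 : 1 ≤ j) (hj2 : j ≤ k-1) :
    (Sdown n k).card = (SJdown n k j).card * (k-1) := by
  have key : ∑ q ∈ Sdown n k, ((SJdown n k j).filter (fun r => REL q r)).card
      = ∑ r ∈ SJdown n k j, ((Sdown n k).filter (fun q => REL q r)).card := by
    simp_rw [Finset.card_filter]
    exact Finset.sum_comm
  calc (Sdown n k).card = ∑ q ∈ Sdown n k, 1 := Finset.card_eq_sum_ones _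
    _ = ∑ q ∈ Sdown n k, ((SJdown n k j).filter (fun r => REL q r)).card :=
        (Finset.sum_congr rfl (fun q hq => (count1 hj1 hj2 hq).symm))
    _ = ∑ r ∈ SJdown n k j, ((Sdown n k).filter (fun q => REL q r)).card := key
    _ = ∑ r ∈ SJdown n k j, (k-1) := Finset.sum_congr rfl (fun r hr => count2 hr)
    _ = (SJdown n k j).card * (k-1) := by rw [Finset.sum_const, smul_eq_mul]

theorem mem_SJdown_iff_path {n k j : ℕ} [NeZero n] {p : Fin (2*n) → ℤ} (hp : IsPM p) :
    dset p ∈ SJdown n k j ↔ ((univ.filter (fun m => p m = 1)).card = n+1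
      ∧ p 0 = -1 ∧ (ED p).card = k-1 ∧ jval p = j) := by
  rw [SJdown, Finset.mem_filter, mem_Sdown_iff, toPath_dset hp]
  tauto

end Nara

/-- Among paths in 𝒫(n−1,1,2) (length 2n, n+1 up steps, n−1 down steps) starting
with a down step and having exactly `k-1` down steps in even positions, for each
`1 ≤ j ≤ k-1` the number with exactly `j` even-position down steps starting on or
below the x-axis is `(1/(k-1))·C(n,k)·C(n-1,k-2)`, the Narayana number `N(n,k)`. -/
theorem narayana_even_down_steps (n k : ℕ) (hn : 1 ≤ n) (hk : 2 ≤ k)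
    (j : ℕ) (hj1 : 1 ≤ j) (hj2 : j ≤ k - 1) :
    Nat.card {p : Fin (2*n) → ℤ //
      (∀ m, p m = 1 ∨ p m = -1) ∧
      (univ.filter (fun m => p m = 1)).card = n + 1 ∧
      p ⟨0, by omega⟩ = -1 ∧
      (univ.filter (fun m : Fin (2*n) => p m = -1 ∧ (m : ℕ) % 2 = 0)).card = k - 1 ∧
      (univ.filter (fun m : Fin (2*n) =>
        p m = -1 ∧ (m : ℕ) % 2 = 0 ∧ psum p (m : ℕ) ≤ 0)).card = j }
      * (k - 1) = Nat.choose n k * Nat.choose (n-1) (k-2) := by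
  haveI : NeZero n := ⟨by omega⟩
  have h0 : (⟨0, by omega⟩ : Fin (2*n)) = 0 := by
    ext
    simp [Nara.val_zero_2n]
  have e : {p : Fin (2*n) → ℤ //
      (∀ m, p m = 1 ∨ p m = -1) ∧
      (univ.filter (fun m => p m = 1)).card = n + 1 ∧
      p ⟨0, by omega⟩ = -1 ∧
      (univ.filter (fun m : Fin (2*n) => p m = -1 ∧ (m : ℕ) % 2 = 0)).card = k - 1 ∧
      (univ.filter (fun m : Fin (2*n) =>
        p m = -1 ∧ (m : ℕ) % 2 = 0 ∧ psum p (m : ℕ) ≤ 0)).card = j }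
      ≃ {q : Finset (Fin (2*n)) // q ∈ Nara.SJdown n k j} :=
    { toFun := fun x => ⟨Nara.dset x.1, by
        have hp := x.2
        rw [Nara.mem_SJdown_iff_path hp.1]
        refine ⟨hp.2.1, ?_, hp.2.2.2.1, hp.2.2.2.2⟩
        rw [← h0]; exact hp.2.2.1⟩,
      invFun := fun y => ⟨Nara.toPath y.1, by
        have hq := y.2
        rw [← Nara.dset_toPath y.1, Nara.mem_SJdown_iff_path (Nara.isPM_toPath y.1)] at hq
        exact ⟨Nara.isPM_toPath y.1, hq.1, by rw [h0]; exact hq.2.1, hq.2.2.1, hq.2.2.2⟩⟩,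
      left_inv := fun x => Subtype.ext (Nara.toPath_dset x.2.1),
      right_inv := fun y => Subtype.ext (Nara.dset_toPath y.1) }
  rw [Nat.card_congr e, Nat.card_eq_fintype_card, Fintype.card_coe,
    ← Nara.cardA hj1 hj2, Nara.card_Sdown hk]
end

section
/- Let r ≥ 1 and n ≥ 1. For each k with 1 ≤ k ≤ rn+1, the number of paths p in 𝒫(n,r,1) with p_1 = +1 such that exactly k up steps of p start on or below the x-axis equals (1/(rn+1))·C((r+1)n, n). -/
open Finset

namespace CFaux

variable {N : ℕ} [NeZero N]

/-- periodic extension of the step sequence -/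
def ext (q : Fin N → ℤ) (i : ℕ) : ℤ :=
  q ⟨i % N, Nat.mod_lt _ (Nat.pos_of_ne_zero (NeZero.ne N))⟩

/-- partial sums of the periodic extension -/
def S (q : Fin N → ℤ) (m : ℕ) : ℤ := ∑ i ∈ Finset.range m, ext q i

/-- rotation of a path -/
def rot (t : Fin N) (q : Fin N → ℤ) : Fin N → ℤ := fun j => q (j + t)

lemma S_succ (q : Fin N → ℤ) (m : ℕ) : S q (m + 1) = S q m + ext q m :=
  Finset.sum_range_succ _ _

lemma ext_add_N (q : Fin N → ℤ) (i : ℕ) : ext q (i + N) = ext q i := by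
  simp [ext, Nat.add_mod_right]

lemma S_N (q : Fin N → ℤ) : S q N = ∑ i, q i := by
  rw [S, ← Fin.sum_univ_eq_sum_range (ext q) N]
  apply Finset.sum_congr rfl
  intro i _
  unfold ext
  congr 1
  exact Fin.ext (Nat.mod_eq_of_lt i.isLt)

lemma S_add_N (q : Fin N → ℤ) (m : ℕ) : S q (m + N) = S q m + ∑ i, q i := by
  induction m with
  | zero => simpa [S] using S_N q
  | succ m ih =>
      have h1 : m + 1 + N = (m + N) + 1 := by omega
      rw [h1, S_succ, ih, S_succ, ext_add_N]
      ring

lemma psum_eq_S (q : Fin N → ℤ) {m : ℕ} (hm : m ≤ N) : psum q m = S q m := by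
  unfold psum S
  refine Finset.sum_nbij' (fun j => (j : ℕ))
    (fun i => (⟨i % N, Nat.mod_lt _ (Nat.pos_of_ne_zero (NeZero.ne N))⟩ : Fin N))
    ?_ ?_ ?_ ?_ ?_
  · intro a ha
    simp only [Finset.mem_filter] at ha
    simpa using ha.2
  · intro i hi
    simp only [Finset.mem_range] at hi
    simp [Nat.mod_eq_of_lt (lt_of_lt_of_le hi hm), hi]
  · intro a ha
    simp only [Finset.mem_filter] at ha
    exact Fin.ext (by simp [Nat.mod_eq_of_lt a.isLt])
  · intro i hi
    simp only [Finset.mem_range] at hi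
    simp [Nat.mod_eq_of_lt (lt_of_lt_of_le hi hm)]
  · intro a _
    unfold ext
    congr 1
    exact Fin.ext (Nat.mod_eq_of_lt a.isLt).symm

lemma S_rot (t : Fin N) (q : Fin N → ℤ) (m : ℕ) :
    S (rot t q) m = S q ((t : ℕ) + m) - S q (t : ℕ) := by
  induction m with
  | zero => simp [S]
  | succ m ih =>
      rw [S_succ, ih, ← Nat.add_assoc, S_succ]
      have : ext (rot t q) m = ext q ((t : ℕ) + m) := by
        unfold ext rot
        congr 1
        rw [Fin.add_def]
        apply Fin.ext
        simp [Nat.mod_add_mod, Nat.add_mod_left, Nat.add_comm]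
      rw [this]
      ring

lemma psum_rot (t : Fin N) (q : Fin N → ℤ) {m : ℕ} (hm : m ≤ N) :
    psum (rot t q) m = S q ((t : ℕ) + m) - S q (t : ℕ) := by
  rw [psum_eq_S _ hm, S_rot]

/-- the count of up steps starting at level ≤ 0 for the rotated path, as a rank -/
lemma card_rot (q : Fin N → ℤ) (hsum : ∑ i, q i = 1) (t : Fin N) :
    (univ.filter (fun i : Fin N => rot t q i = 1 ∧ psum (rot t q) (i : ℕ) ≤ 0)).card
    = (univ.filter (fun u : Fin N => q u = 1 ∧
        (S q (u : ℕ) < S q (t : ℕ) ∨ (S q (u : ℕ) = S q (t : ℕ) ∧ t ≤ u)))).card := by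
  apply Finset.card_equiv (Equiv.addRight t)
  intro i
  simp only [Finset.mem_filter, Finset.mem_univ, true_and, Equiv.coe_addRight]
  have hps : psum (rot t q) (i : ℕ) = S q ((t : ℕ) + (i : ℕ)) - S q (t : ℕ) :=
    psum_rot t q (le_of_lt i.isLt)
  have hval : ((i + t : Fin N) : ℕ) = ((i : ℕ) + (t : ℕ)) % N := by
    rw [Fin.add_def]
  have hrot : rot t q i = q (i + t) := rfl
  rw [hrot, hps]
  constructor
  · rintro ⟨h1, h2⟩
    refine ⟨h1, ?_⟩
    rcases lt_or_ge ((i : ℕ) + (t : ℕ)) N with h | h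
    · have hu : ((i + t : Fin N) : ℕ) = (i : ℕ) + (t : ℕ) := by
        rw [hval, Nat.mod_eq_of_lt h]
      have hle : t ≤ i + t := by
        rw [Fin.le_def, hu]; omega
      have : S q ((i + t : Fin N) : ℕ) ≤ S q (t : ℕ) := by
        rw [hu, Nat.add_comm]; omega
      rcases lt_or_eq_of_le this with h' | h'
      · exact Or.inl h'
      · exact Or.inr ⟨h', hle⟩
    · have hu : ((i + t : Fin N) : ℕ) + N = (i : ℕ) + (t : ℕ) := by
        rw [hval]
        have h2N : (i : ℕ) + (t : ℕ) < 2 * N := by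
          have := i.isLt; have := t.isLt; omega
        rw [Nat.mod_eq_sub_mod h, Nat.mod_eq_of_lt (by omega)]
        omega
      left
      have : S q (((i + t : Fin N) : ℕ) + N) ≤ S q (t : ℕ) := by
        rw [hu, Nat.add_comm (i : ℕ)]; omega
      rw [S_add_N, hsum] at this
      omega
  · rintro ⟨h1, h2⟩
    refine ⟨h1, ?_⟩
    rcases lt_or_ge ((i : ℕ) + (t : ℕ)) N with h | h
    · have hu : ((i + t : Fin N) : ℕ) = (i : ℕ) + (t : ℕ) := by
        rw [hval, Nat.mod_eq_of_lt h]
      have : S q ((i + t : Fin N) : ℕ) ≤ S q (t : ℕ) := by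
        rcases h2 with h' | h'
        · omega
        · omega
      rw [hu, Nat.add_comm] at this
      omega
    · have hu : ((i + t : Fin N) : ℕ) + N = (i : ℕ) + (t : ℕ) := by
        rw [hval]
        have h2N : (i : ℕ) + (t : ℕ) < 2 * N := by
          have := i.isLt; have := t.isLt; omega
        rw [Nat.mod_eq_sub_mod h, Nat.mod_eq_of_lt (by omega)]
        omega
      have hntle : ¬ (t ≤ i + t) := by
        rw [Fin.le_def]
        have := i.isLt
        omega
      have hlt : S q ((i + t : Fin N) : ℕ) < S q (t : ℕ) := by
        rcases h2 with h' | h'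
        · exact h'
        · exact absurd h'.2 hntle
      have : S q (((i + t : Fin N) : ℕ) + N) ≤ S q (t : ℕ) := by
        rw [S_add_N, hsum]; omega
      rw [hu, Nat.add_comm (i : ℕ)] at this
      omega

/-- generic rank bijection: for an injective key on a finset, ranks hit each value once -/
lemma rank_bij {α ι : Type*} [DecidableEq α] [LinearOrder ι]
    (s : Finset α) (κ : α → ι) (hκ : Set.InjOn κ s)
    (k : ℕ) (hk1 : 1 ≤ k) (hk2 : k ≤ s.card) :
    ∃! t, t ∈ s ∧ (s.filter (fun u => κ u ≤ κ t)).card = k := by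
  classical
  set g : α → ℕ := fun t => (s.filter (fun u => κ u ≤ κ t)).card with hg
  have hmono : ∀ t₁ ∈ s, ∀ t₂ ∈ s, κ t₁ < κ t₂ → g t₁ < g t₂ := by
    intro t₁ h₁ t₂ h₂ hlt
    apply Finset.card_lt_card
    constructor
    · intro u hu
      simp only [Finset.mem_filter] at hu ⊢
      exact ⟨hu.1, le_of_lt (lt_of_le_of_lt hu.2 hlt)⟩
    · intro hsub
      have : t₂ ∈ s.filter (fun u => κ u ≤ κ t₂) := by
        simp [h₂]
      have := hsub this
      simp only [Finset.mem_filter] at this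
      exact absurd this.2 (not_le.mpr hlt)
  have hinj : Set.InjOn g s := by
    intro t₁ h₁ t₂ h₂ heq
    by_contra hne
    rcases (hκ.ne_iff h₁ h₂).mpr hne |>.lt_or_gt with h | h
    · exact absurd heq (Nat.ne_of_lt (hmono _ h₁ _ h₂ h))
    · exact absurd heq.symm (Nat.ne_of_lt (hmono _ h₂ _ h₁ h))
  have himg : s.image g = Finset.Icc 1 s.card := by
    apply Finset.eq_of_subset_of_card_le
    · intro x hx
      simp only [Finset.mem_image] at hx
      obtain ⟨t, ht, rfl⟩ := hx
      simp only [Finset.mem_Icc]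
      constructor
      · have : t ∈ s.filter (fun u => κ u ≤ κ t) := by simp [ht]
        exact Finset.card_pos.mpr ⟨t, this⟩
      · exact Finset.card_filter_le _ _
    · rw [Finset.card_image_of_injOn hinj, Nat.card_Icc]
      omega
  have hk : k ∈ s.image g := by
    rw [himg]
    simp only [Finset.mem_Icc]
    exact ⟨hk1, hk2⟩
  simp only [Finset.mem_image] at hk
  obtain ⟨t, ht, htk⟩ := hk
  refine ⟨t, ⟨ht, htk⟩, ?_⟩
  intro y ⟨hy, hyk⟩
  exact hinj hy ht (hyk.trans htk.symm)

/-- the key existence-and-uniqueness lemma for rotations -/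
lemma exists_unique_rot (q : Fin N → ℤ) (hsum : ∑ i, q i = 1)
    (m k : ℕ) (hups : (univ.filter (fun i : Fin N => q i = 1)).card = m)
    (hk1 : 1 ≤ k) (hk2 : k ≤ m) :
    ∃! t : Fin N, q t = 1 ∧
      (univ.filter (fun i : Fin N => rot t q i = 1 ∧ psum (rot t q) (i : ℕ) ≤ 0)).card = k := by
  classical
  have hκinj : Set.InjOn (fun u : Fin N => toLex (S q (u : ℕ), -((u : ℕ) : ℤ)))
      ↑(univ.filter (fun i : Fin N => q i = 1)) := by
    intro u _ v _ h
    have h2 := congrArg (fun x : Lex (ℤ × ℤ) => (ofLex x).2) h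
    simp only [ofLex_toLex] at h2
    apply Fin.ext
    have : ((u : ℕ) : ℤ) = ((v : ℕ) : ℤ) := by omega
    exact_mod_cast this
  have hrank := rank_bij (univ.filter (fun i : Fin N => q i = 1))
    (fun u : Fin N => toLex (S q (u : ℕ), -((u : ℕ) : ℤ))) hκinj k hk1 (by rw [hups]; exact hk2)
  have hiff : ∀ t : Fin N,
      ((univ.filter (fun i : Fin N => q i = 1)).filter
        (fun u : Fin N => toLex (S q (u : ℕ), -((u : ℕ) : ℤ)) ≤ toLex (S q (t : ℕ), -((t : ℕ) : ℤ)))).card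
      = (univ.filter (fun i : Fin N => rot t q i = 1 ∧ psum (rot t q) (i : ℕ) ≤ 0)).card := by
    intro t
    rw [card_rot q hsum t]
    have hset : ((univ.filter (fun i : Fin N => q i = 1)).filter
        (fun u : Fin N => toLex (S q (u : ℕ), -((u : ℕ) : ℤ)) ≤ toLex (S q (t : ℕ), -((t : ℕ) : ℤ))))
        = univ.filter (fun u : Fin N => q u = 1 ∧
          (S q (u : ℕ) < S q (t : ℕ) ∨ (S q (u : ℕ) = S q (t : ℕ) ∧ t ≤ u))) := by
      rw [Finset.filter_filter]
      apply Finset.filter_congr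
      intro u _
      simp only [Prod.Lex.le_iff, ofLex_toLex]
      constructor
      · rintro ⟨h1, h2⟩
        refine ⟨h1, ?_⟩
        rcases h2 with h | ⟨he, hle⟩
        · exact Or.inl h
        · refine Or.inr ⟨he, ?_⟩
          rw [Fin.le_def]
          omega
      · rintro ⟨h1, h2⟩
        refine ⟨h1, ?_⟩
        rcases h2 with h | ⟨he, hle⟩
        · exact Or.inl h
        · refine Or.inr ⟨he, ?_⟩
          rw [Fin.le_def] at hle
          omega
    rw [hset]
  obtain ⟨t, ⟨ht, htk⟩, huniq⟩ := hrank
  simp only [Finset.mem_filter, Finset.mem_univ, true_and] at ht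
  refine ⟨t, ⟨ht, by rw [← hiff t]; exact htk⟩, ?_⟩
  intro y ⟨hy1, hy2⟩
  apply huniq
  refine ⟨by simp [hy1], ?_⟩
  rw [hiff y]
  exact hy2

lemma card_ups_rot (t : Fin N) (q : Fin N → ℤ) :
    (univ.filter (fun i : Fin N => rot t q i = 1)).card
      = (univ.filter (fun i : Fin N => q i = 1)).card := by
  apply Finset.card_equiv (Equiv.addRight t)
  intro i
  rw [Finset.mem_filter, Finset.mem_filter]
  simp [rot]

lemma card_ups_unrot (t : Fin N) (p : Fin N → ℤ) :
    (univ.filter (fun i : Fin N => p (i - t) = 1)).card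
      = (univ.filter (fun i : Fin N => p i = 1)).card := by
  apply Finset.card_equiv (Equiv.subRight t)
  intro i
  simp

end CFaux

section Main

open CFaux

variable (r n : ℕ)

/-- total sum of steps is 1 -/
lemma sum_steps {N : ℕ} (q : Fin N → ℤ) (r n : ℕ)
    (hN : N = (r+1)*n+1)
    (hstep : ∀ i, q i = 1 ∨ q i = -(r : ℤ))
    (hups : (univ.filter (fun i => q i = 1)).card = r*n + 1) :
    ∑ i, q i = 1 := by
  classical
  have hN' : N = r*n + n + 1 := by rw [hN]; ring
  have hcard2 : (univ.filter (fun i => ¬ q i = 1)).card = n := by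
    have h := Finset.card_filter_add_card_filter_not
      (s := (univ : Finset (Fin N))) (fun i => q i = 1)
    rw [hups, Finset.card_univ, Fintype.card_fin] at h
    have h2 := h.trans hN'
    omega
  have h1 : ∑ i ∈ univ.filter (fun i => q i = 1), q i = ((r*n + 1 : ℕ) : ℤ) := by
    rw [Finset.sum_congr rfl (g := fun _ => (1:ℤ)) (fun i hi => (Finset.mem_filter.mp hi).2),
      Finset.sum_const, hups]
    simp
  have h2 : ∑ i ∈ univ.filter (fun i => ¬ q i = 1), q i = (n : ℤ) * (-(r:ℤ)) := by
    have hall : ∀ i ∈ univ.filter (fun i => ¬ q i = 1), q i = -(r:ℤ) := by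
      intro i hi
      rcases hstep i with h | h
      · exact absurd h (Finset.mem_filter.mp hi).2
      · exact h
    rw [Finset.sum_congr rfl hall, Finset.sum_const, hcard2, nsmul_eq_mul]
  rw [← Finset.sum_filter_add_sum_filter_not univ (fun i => q i = 1) q, h1, h2]
  push_cast
  ring

end Main

open CFaux in
/-- the set of all paths (no condition on the first step) -/
def PA (r n : ℕ) : Type := {q : Fin ((r+1)*n+1) → ℤ //
  (∀ i, q i = 1 ∨ q i = -(r : ℤ)) ∧ (univ.filter (fun i => q i = 1)).card = r*n + 1}

open CFaux in
/-- the paths starting with an up step with statistic k -/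
def PB (r n k : ℕ) : Type := {p : Fin ((r+1)*n+1) → ℤ //
  (∀ i, p i = 1 ∨ p i = -(r : ℤ)) ∧
  (univ.filter (fun i => p i = 1)).card = r*n + 1 ∧
  p ⟨0, Nat.succ_pos _⟩ = 1 ∧
  (univ.filter (fun i : Fin ((r+1)*n+1) => p i = 1 ∧ psum p (i : ℕ) ≤ 0)).card = k}

lemma cardPA (r n : ℕ) (hr : 1 ≤ r) : Nat.card (PA r n) = Nat.choose ((r+1)*n+1) n := by
  classical
  have hring : (r+1)*n+1 = r*n + n + 1 := by ring
  have hne : ¬ (-(r:ℤ) = 1) := by omega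
  have key : ∀ q : Fin ((r+1)*n+1) → ℤ, (∀ i, q i = 1 ∨ q i = -(r : ℤ)) →
      (univ.filter (fun i => q i = 1)).card = r*n + 1 →
      (univ.filter (fun i => ¬ q i = 1)).card = n := by
    intro q hstep hups
    have h := Finset.card_filter_add_card_filter_not
      (s := (univ : Finset (Fin ((r+1)*n+1)))) (fun i => q i = 1)
    rw [hups, Finset.card_univ, Fintype.card_fin] at h
    omega
  have e : PA r n ≃ {s : Finset (Fin ((r+1)*n+1)) // s.card = n} :=
    { toFun := fun q => ⟨univ.filter (fun i => ¬ q.1 i = 1), key q.1 q.2.1 q.2.2⟩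
      invFun := fun s => ⟨fun i => if i ∈ s.1 then -(r:ℤ) else 1, by
        constructor
        · intro i
          by_cases h : i ∈ s.1 <;> simp [h]
        · have hflt : (univ.filter (fun i : Fin ((r+1)*n+1) =>
              (if i ∈ s.1 then -(r:ℤ) else 1) = 1)) = s.1ᶜ := by
            ext i
            by_cases h : i ∈ s.1 <;> simp [h, hne]
          rw [hflt, Finset.card_compl, Fintype.card_fin, s.2]
          omega⟩
      left_inv := fun q => by
        apply Subtype.ext
        funext i
        rcases q.2.1 i with h | h
        · simp [Finset.mem_filter, h]
        · simp [Finset.mem_filter, h, hne]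
      right_inv := fun s => by
        apply Subtype.ext
        ext i
        by_cases h : i ∈ s.1 <;> simp [Finset.mem_filter, h, hne] }
  rw [Nat.card_congr e, Nat.card_eq_fintype_card, Fintype.card_finset_len, Fintype.card_fin]

open CFaux in
lemma equivPAB (r n k : ℕ) (hk1 : 1 ≤ k) (hk2 : k ≤ r*n + 1) :
    Nat.card (PA r n) = Nat.card (PB r n k) * ((r+1)*n+1) := by
  classical
  haveI : NeZero ((r+1)*n+1) := ⟨Nat.succ_ne_zero _⟩
  have h0 : (⟨0, Nat.succ_pos _⟩ : Fin ((r+1)*n+1)) = 0 := by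
    apply Fin.ext
    simp
  have H : ∀ q : PA r n, ∃! t : Fin ((r+1)*n+1), q.1 t = 1 ∧
      (univ.filter (fun i : Fin ((r+1)*n+1) =>
        rot t q.1 i = 1 ∧ psum (rot t q.1) (i : ℕ) ≤ 0)).card = k :=
    fun q => exists_unique_rot q.1 (sum_steps q.1 r n rfl q.2.1 q.2.2) (r*n+1) k q.2.2 hk1 hk2
  let F : PA r n → PB r n k × Fin ((r+1)*n+1) := fun q =>
    (⟨rot (H q).choose q.1,
      fun i => q.2.1 (i + (H q).choose),
      (card_ups_rot _ _).trans q.2.2,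
      by
        show q.1 ((⟨0, Nat.succ_pos _⟩ : Fin ((r+1)*n+1)) + (H q).choose) = 1
        rw [h0, zero_add]
        exact (H q).choose_spec.1.1,
      (H q).choose_spec.1.2⟩, (H q).choose)
  have hinj : Function.Injective F := by
    intro q₁ q₂ h
    have h2 : (H q₁).choose = (H q₂).choose := congrArg Prod.snd h
    have h1 : rot (H q₁).choose q₁.1 = rot (H q₂).choose q₂.1 :=
      congrArg (fun x : PB r n k × Fin ((r+1)*n+1) => x.1.1) h
    apply Subtype.ext
    funext j
    have h3 := congrFun h1 (j - (H q₁).choose)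
    rw [h2] at h3
    simpa [rot, sub_add_cancel] using h3
  have hsurj : Function.Surjective F := by
    rintro ⟨p, t⟩
    refine ⟨⟨fun j => p.1 (j - t),
      ⟨fun i => p.2.1 (i - t), (card_ups_unrot t p.1).trans p.2.2.1⟩⟩, ?_⟩
    set q : PA r n := ⟨fun j => p.1 (j - t),
      ⟨fun i => p.2.1 (i - t), (card_ups_unrot t p.1).trans p.2.2.1⟩⟩ with hqdef
    have hrotq : rot t q.1 = p.1 := by
      funext j
      show p.1 (j + t - t) = p.1 j
      rw [add_sub_cancel_right]
    have hPt : q.1 t = 1 ∧ (univ.filter (fun i : Fin ((r+1)*n+1) =>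
        rot t q.1 i = 1 ∧ psum (rot t q.1) (i : ℕ) ≤ 0)).card = k := by
      constructor
      · show p.1 (t - t) = 1
        rw [sub_self, ← h0]
        exact p.2.2.2.1
      · rw [hrotq]
        exact p.2.2.2.2
    have hτ : (H q).choose = t := ((H q).choose_spec.2 t hPt).symm
    have e1 : (F q).1.1 = p.1 := by
      show rot (H q).choose q.1 = p.1
      rw [hτ, hrotq]
    exact Prod.ext_iff.mpr ⟨Subtype.ext e1, hτ⟩
  have hcard := Nat.card_eq_of_bijective F ⟨hinj, hsurj⟩
  rw [hcard, Nat.card_prod, Nat.card_eq_fintype_card (α := Fin ((r+1)*n+1)), Fintype.card_fin]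

/-- Among paths in 𝒫(n,r,1) (steps +1 or −r, with rn+1 up steps and n down steps)
starting with an up step, for each `1 ≤ k ≤ rn+1` the number with exactly `k` up
steps starting on or below the x-axis is `(1/(rn+1))·C((r+1)n,n)`. -/
theorem generalized_catalan_chung_feller_up (r n : ℕ) (hr : 1 ≤ r) (hn : 1 ≤ n)
    (k : ℕ) (hk1 : 1 ≤ k) (hk2 : k ≤ r*n + 1) :
    Nat.card {p : Fin ((r+1)*n+1) → ℤ //
      (∀ i, p i = 1 ∨ p i = -(r : ℤ)) ∧
      (univ.filter (fun i => p i = 1)).card = r*n + 1 ∧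
      p ⟨0, Nat.succ_pos _⟩ = 1 ∧
      (univ.filter (fun i : Fin ((r+1)*n+1) => p i = 1 ∧ psum p (i : ℕ) ≤ 0)).card = k }
      * (r*n + 1) = Nat.choose ((r+1)*n) n := by
  classical
  have h3 : Nat.card (PB r n k) * ((r+1)*n+1) = Nat.choose ((r+1)*n+1) n := by
    rw [← equivPAB r n k hk1 hk2, cardPA r n hr]
  have hring : (r+1)*n = r*n + n := by ring
  have hle : n ≤ (r+1)*n := by omega
  have key : ((r+1)*n+1) * Nat.choose ((r+1)*n) n = Nat.choose ((r+1)*n+1) n * (r*n+1) := by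
    have h4 := Nat.add_one_mul_choose_eq ((r+1)*n) (r*n)
    have e1 : Nat.choose ((r+1)*n) (r*n) = Nat.choose ((r+1)*n) n := by
      have hsub : (r+1)*n - n = r*n := by omega
      rw [← hsub]
      exact Nat.choose_symm hle
    have e2 : Nat.choose ((r+1)*n+1) (r*n+1) = Nat.choose ((r+1)*n+1) n := by
      have hsub2 : (r+1)*n+1 - n = r*n+1 := by omega
      rw [← hsub2]
      exact Nat.choose_symm (by omega)
    rw [e1, e2] at h4
    simpa [Nat.succ_eq_add_one] using h4
  show Nat.card (PB r n k) * (r*n + 1) = Nat.choose ((r+1)*n) n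
  have hpos : 0 < (r+1)*n+1 := Nat.succ_pos _
  apply Nat.eq_of_mul_eq_mul_left hpos
  calc ((r+1)*n+1) * (Nat.card (PB r n k) * (r*n+1))
      = (Nat.card (PB r n k) * ((r+1)*n+1)) * (r*n+1) := by ring
    _ = Nat.choose ((r+1)*n+1) n * (r*n+1) := by rw [h3]
    _ = ((r+1)*n+1) * Nat.choose ((r+1)*n) n := key.symm
end

section
/- Let r ≥ 1 and n ≥ 1. For each k with 1 ≤ k ≤ (r+1)n+1, the number of paths p in 𝒫(n,r,1) such that exactly k of the vertices s_0, s_1, …, s_{(r+1)n} satisfy s_i ≤ 0 equals (1/((r+1)n+1))·C((r+1)n+1, n). -/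
open Finset

namespace CF
variable {N : ℕ}

lemma psum_zero (p : Fin N → ℤ) : psum p 0 = 0 := by simp [psum]

lemma psum_succ (p : Fin N → ℤ) {m : ℕ} (hm : m < N) :
    psum p (m + 1) = psum p m + p ⟨m, hm⟩ := by
  unfold psum
  have h : Finset.univ.filter (fun j : Fin N => (j : ℕ) < m + 1)
      = insert ⟨m, hm⟩ (Finset.univ.filter (fun j : Fin N => (j : ℕ) < m)) := by
    ext j
    simp [Fin.ext_iff]
    omega
  rw [h, Finset.sum_insert (by simp)]
  ring

lemma psum_top (p : Fin N → ℤ) : psum p N = ∑ j, p j := by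
  unfold psum
  congr 1
  apply Finset.filter_true_of_mem
  intro j _
  exact j.isLt

/-- The heights of the path extended (cyclically) past position `N`, using total sum `1`. -/
def Sbar (p : Fin N → ℤ) (x : ℕ) : ℤ :=
  if x < N then psum p x else psum p (x - N) + 1

lemma Sbar_succ (p : Fin N → ℤ) (hsum : psum p N = 1) (hN : 0 < N) {x : ℕ} (hx : x < 2 * N) :
    Sbar p (x + 1) = Sbar p x + p ⟨x % N, Nat.mod_lt _ hN⟩ := by
  unfold Sbar
  rcases lt_trichotomy (x + 1) N with h | h | h
  · have hfin : (⟨x % N, Nat.mod_lt _ hN⟩ : Fin N) = ⟨x, by omega⟩ := by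
      simp [Fin.ext_iff, Nat.mod_eq_of_lt (show x < N by omega)]
    rw [if_pos h, if_pos (by omega), hfin, psum_succ p (show x < N by omega)]
  · have hfin : (⟨x % N, Nat.mod_lt _ hN⟩ : Fin N) = ⟨x, by omega⟩ := by
      simp [Fin.ext_iff, Nat.mod_eq_of_lt (show x < N by omega)]
    rw [if_neg (by omega), if_pos (by omega), hfin]
    have h2 : x + 1 - N = 0 := by omega
    rw [h2, psum_zero]
    have h4 := psum_succ p (show x < N by omega)
    have h5 : psum p (x + 1) = 1 := by rw [h, hsum]
    omega
  · have hxN : N ≤ x := by omega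
    have hmod : x % N = x - N := by
      rw [Nat.mod_eq_sub_mod hxN, Nat.mod_eq_of_lt (by omega)]
    have hfin : (⟨x % N, Nat.mod_lt _ hN⟩ : Fin N) = ⟨x - N, by omega⟩ := by
      simp [Fin.ext_iff, hmod]
    rw [if_neg (by omega), if_neg (by omega), hfin]
    have h3 : x + 1 - N = (x - N) + 1 := by omega
    rw [h3, psum_succ p (show x - N < N by omega)]
    ring

/-- Cyclic rotation of a path by `t`. -/
def rot [NeZero N] (t : Fin N) (p : Fin N → ℤ) : Fin N → ℤ := fun j => p (j + t)

lemma rot_rot [NeZero N] (s t : Fin N) (p : Fin N → ℤ) :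
    rot s (rot t p) = rot (s + t) p := by
  funext j
  simp [rot, add_assoc]

lemma rot_zero [NeZero N] (p : Fin N → ℤ) : rot 0 p = p := by
  funext j; simp [rot]

lemma psum_rot [NeZero N] (p : Fin N → ℤ) (hsum : psum p N = 1) (t : Fin N)
    {m : ℕ} (hm : m ≤ N) :
    psum (rot t p) m = Sbar p (t.val + m) - psum p t.val := by
  have hN : 0 < N := Nat.pos_of_ne_zero (NeZero.ne N)
  induction m with
  | zero =>
    rw [psum_zero, Nat.add_zero, Sbar, if_pos t.isLt]
    ring
  | succ m ih =>
    have hm' : m < N := by omega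
    rw [psum_succ (rot t p) hm', ih (by omega), ← Nat.add_assoc,
      Sbar_succ p hsum hN (show t.val + m < 2*N by have := t.isLt; omega)]
    have hfin : (⟨m, hm'⟩ + t : Fin N) = ⟨(t.val + m) % N, Nat.mod_lt _ hN⟩ := by
      simp [Fin.ext_iff, Fin.add_def, Nat.add_comm]
    rw [rot, hfin]
    ring

/-- The number of nonpositive vertices among `s_0, …, s_{N-1}`. -/
def cnt (p : Fin N → ℤ) : ℕ := ((Finset.range N).filter (fun m => psum p m ≤ 0)).card

lemma rank_lt_rank {α : Type*} [Fintype α] [DecidableEq α] {β : Type*} [LinearOrder β]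
    {f : α → β} {a b : α} (h : f a < f b) :
    (univ.filter (fun x => f x ≤ f a)).card < (univ.filter (fun x => f x ≤ f b)).card := by
  apply Finset.card_lt_card
  rw [Finset.ssubset_iff_of_subset]
  · exact ⟨b, by simp, by simp [not_le.mpr h]⟩
  · intro x hx
    simp only [mem_filter, mem_univ, true_and] at hx ⊢
    exact hx.trans h.le

lemma rank_injective {α : Type*} [Fintype α] [DecidableEq α] {β : Type*} [LinearOrder β]
    {f : α → β} (hf : Function.Injective f) :
    Function.Injective (fun a => (univ.filter (fun x => f x ≤ f a)).card) := by
  intro a b hab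
  by_contra hne
  rcases (hf.ne hne).lt_or_gt with h | h
  · exact absurd hab (Nat.ne_of_lt (rank_lt_rank h))
  · exact absurd hab (Nat.ne_of_lt (rank_lt_rank h)).symm

/-- The linear order used to rank rotation starting points. -/
def rkf (p : Fin N → ℤ) (t : Fin N) : ℤ ×ₗ ℤ := toLex (psum p t.val, -(t.val : ℤ))

lemma rkf_injective (p : Fin N → ℤ) : Function.Injective (rkf p) := by
  intro a b hab
  have := congrArg (fun x : ℤ ×ₗ ℤ => (ofLex x).2) hab
  simp only [rkf, ofLex_toLex] at this
  exact Fin.ext (by exact_mod_cast neg_injective this)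

def rk (p : Fin N → ℤ) (t : Fin N) : ℕ :=
  (Finset.univ.filter (fun t' : Fin N => rkf p t' ≤ rkf p t)).card

lemma rk_injective (p : Fin N → ℤ) : Function.Injective (rk p) :=
  rank_injective (rkf_injective p)

lemma cnt_rot [NeZero N] (p : Fin N → ℤ) (hsum : psum p N = 1) (t : Fin N) :
    cnt (rot t p) = rk p t := by
  have hN : 0 < N := Nat.pos_of_ne_zero (NeZero.ne N)
  unfold cnt rk rkf
  apply Finset.card_bij' (i := fun m _ => (⟨(t.val + m) % N, Nat.mod_lt _ hN⟩ : Fin N))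
    (j := fun t' _ => (t'.val + N - t.val) % N)
  · intro m hm
    simp only [Finset.mem_filter, Finset.mem_range] at hm
    obtain ⟨hmN, hle⟩ := hm
    rw [psum_rot p hsum t (le_of_lt hmN), sub_nonpos] at hle
    simp only [Finset.mem_filter, Finset.mem_univ, true_and]
    rw [Prod.Lex.le_iff, ofLex_toLex, ofLex_toLex]
    have ht := t.isLt
    rcases lt_or_ge (t.val + m) N with h | h
    · rw [Nat.mod_eq_of_lt h]
      rw [Sbar, if_pos h] at hle
      rcases lt_or_eq_of_le hle with h2 | h2
      · exact Or.inl h2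
      · exact Or.inr ⟨h2, by simp⟩
    · have hmod : (t.val + m) % N = t.val + m - N := by
        rw [Nat.mod_eq_sub_mod h, Nat.mod_eq_of_lt (by omega)]
      rw [hmod]
      rw [Sbar, if_neg (by omega)] at hle
      left
      omega
  · intro t' ht'
    simp only [Finset.mem_filter, Finset.mem_univ, true_and] at ht'
    rw [Prod.Lex.le_iff, ofLex_toLex, ofLex_toLex] at ht'
    simp only [Finset.mem_filter, Finset.mem_range]
    have ht := t.isLt
    have ht2 := t'.isLt
    refine ⟨Nat.mod_lt _ hN, ?_⟩
    rw [psum_rot p hsum t (le_of_lt (Nat.mod_lt _ hN)), sub_nonpos]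
    rcases lt_or_ge t'.val t.val with h | h
    · have hm : (t'.val + N - t.val) % N = t'.val + N - t.val := Nat.mod_eq_of_lt (by omega)
      rw [hm, show t.val + (t'.val + N - t.val) = t'.val + N by omega, Sbar, if_neg (by omega),
        show t'.val + N - N = t'.val by omega]
      rcases ht' with h2 | ⟨h2, h3⟩
      · omega
      · exfalso; simp at h3; omega
    · have hm : (t'.val + N - t.val) % N = t'.val - t.val := by
        rw [show t'.val + N - t.val = (t'.val - t.val) + N by omega,
          Nat.add_mod_right, Nat.mod_eq_of_lt (by omega)]
      rw [hm, show t.val + (t'.val - t.val) = t'.val by omega, Sbar, if_pos ht2]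
      rcases ht' with h2 | ⟨h2, h3⟩
      · omega
      · omega
  · intro m hm
    simp only [Finset.mem_filter, Finset.mem_range] at hm
    have ht := t.isLt
    show ((t.val + m) % N + N - t.val) % N = m
    rcases lt_or_ge (t.val + m) N with h | h
    · rw [Nat.mod_eq_of_lt h, show t.val + m + N - t.val = m + N by omega,
        Nat.add_mod_right, Nat.mod_eq_of_lt hm.1]
    · have hmod : (t.val + m) % N = t.val + m - N := by
        rw [Nat.mod_eq_sub_mod h, Nat.mod_eq_of_lt (by omega)]
      rw [hmod, show t.val + m - N + N - t.val = m by omega, Nat.mod_eq_of_lt hm.1]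
  · intro t' ht'
    have ht := t.isLt
    have ht2 := t'.isLt
    apply Fin.ext
    show (t.val + (t'.val + N - t.val) % N) % N = t'.val
    rcases lt_or_ge t'.val t.val with h | h
    · rw [Nat.mod_eq_of_lt (show t'.val + N - t.val < N by omega),
        show t.val + (t'.val + N - t.val) = t'.val + N by omega,
        Nat.add_mod_right, Nat.mod_eq_of_lt ht2]
    · rw [show t'.val + N - t.val = (t'.val - t.val) + N by omega,
        Nat.add_mod_right, Nat.mod_eq_of_lt (show t'.val - t.val < N by omega),
        show t.val + (t'.val - t.val) = t'.val by omega, Nat.mod_eq_of_lt ht2]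

end CF

/-- Among paths in 𝒫(n,r,1), for each `1 ≤ k ≤ (r+1)n+1` the number of paths with
exactly `k` of the vertices `s_0, …, s_{(r+1)n}` on or below the x-axis is
`(1/((r+1)n+1))·C((r+1)n+1,n)`. -/
theorem generalized_catalan_chung_feller_vertices (r n : ℕ) (hr : 1 ≤ r) (hn : 1 ≤ n)
    (k : ℕ) (hk1 : 1 ≤ k) (hk2 : k ≤ (r+1)*n + 1) :
    Nat.card {p : Fin ((r+1)*n+1) → ℤ //
      (∀ i, p i = 1 ∨ p i = -(r : ℤ)) ∧
      (univ.filter (fun i => p i = 1)).card = r*n + 1 ∧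
      (((Finset.range ((r+1)*n+1)).filter (fun m => psum p m ≤ 0)).card = k) }
      * ((r+1)*n + 1) = Nat.choose ((r+1)*n+1) n := by
  set N : ℕ := (r+1)*n+1 with hNdef
  set U : ℕ := r*n+1 with hUdef
  have hNU : N = U + n := by rw [hNdef, hUdef]; ring
  have hN : 0 < N := by rw [hNdef]; omega
  haveI : NeZero N := ⟨by omega⟩
  -- total sum of any path is 1
  have hsum : ∀ p : Fin N → ℤ, (∀ i, p i = 1 ∨ p i = -(r : ℤ)) →
      (univ.filter (fun i => p i = 1)).card = U → psum p N = 1 := by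
    intro p hst hup
    rw [CF.psum_top, ← Finset.sum_filter_add_sum_filter_not univ (fun i => p i = 1)]
    have h1 : ∑ i ∈ univ.filter (fun i => p i = 1), p i = (U : ℤ) := by
      rw [Finset.sum_congr rfl (fun i hi => (Finset.mem_filter.mp hi).2), Finset.sum_const, hup]
      simp
    have hcard : (univ.filter (fun i => ¬ p i = 1)).card = n := by
      have h2 := Finset.card_filter_add_card_filter_not
        (s := (univ : Finset (Fin N))) (p := fun i => p i = 1)
      rw [Finset.card_univ, Fintype.card_fin] at h2
      omega
    have h3 : ∑ i ∈ univ.filter (fun i => ¬ p i = 1), p i = -((r : ℤ) * n) := by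
      rw [Finset.sum_congr rfl (fun i hi => show p i = -(r : ℤ) by
          rcases hst i with h | h
          · exact absurd h (Finset.mem_filter.mp hi).2
          · exact h),
        Finset.sum_const, hcard]
      simp
      ring
    rw [h1, h3, hUdef]
    push_cast
    ring
  -- counting bounds
  have cnt_ge : ∀ p : Fin N → ℤ, 1 ≤ CF.cnt p := by
    intro p
    rw [CF.cnt, Nat.succ_le_iff, Finset.card_pos]
    exact ⟨0, by simp [CF.psum_zero, hN]⟩
  have cnt_le : ∀ p : Fin N → ℤ, CF.cnt p ≤ N := by
    intro p
    exact le_trans (Finset.card_filter_le _ _) (by simp)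
  -- surjectivity of counts over rotations
  have exists_t : ∀ p : Fin N → ℤ, psum p N = 1 →
      ∃ t : Fin N, CF.cnt (CF.rot t p) = k := by
    intro p hs
    have hinj : Function.Injective (fun t : Fin N => (⟨CF.cnt (CF.rot t p) - 1, by
        have h1 := cnt_le (CF.rot t p); have h2 := cnt_ge (CF.rot t p); omega⟩ : Fin N)) := by
      intro a b hab
      have h := congrArg Fin.val hab
      simp only at h
      have h1 := cnt_ge (CF.rot a p)
      have h2 := cnt_ge (CF.rot b p)
      have h3 : CF.cnt (CF.rot a p) = CF.cnt (CF.rot b p) := by omega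
      apply CF.rk_injective p
      rw [← CF.cnt_rot p hs a, ← CF.cnt_rot p hs b]
      exact h3
    have hsurj := Finite.injective_iff_surjective.mp hinj
    obtain ⟨t, ht⟩ := hsurj ⟨k - 1, by omega⟩
    have h := congrArg Fin.val ht
    simp only at h
    have := cnt_ge (CF.rot t p)
    exact ⟨t, by omega⟩
  -- rotation preserves the number of up-steps
  have rot_ups : ∀ (p : Fin N → ℤ) (t : Fin N),
      (univ.filter (fun i => CF.rot t p i = 1)).card
        = (univ.filter (fun i => p i = 1)).card := by
    intro p t
    apply Finset.card_bij' (i := fun a _ => a + t) (j := fun a _ => a - t)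
    · intro a ha
      simp only [Finset.mem_filter, Finset.mem_univ, true_and] at ha ⊢
      exact ha
    · intro a ha
      simp only [Finset.mem_filter, Finset.mem_univ, true_and] at ha ⊢
      show p (a - t + t) = 1
      rwa [sub_add_cancel]
    · intro a _; exact add_sub_cancel_right a t
    · intro a _; exact sub_add_cancel a t
  -- count Ω via subsets
  have e : {p : Fin N → ℤ // (∀ i, p i = 1 ∨ p i = -(r : ℤ)) ∧
        (univ.filter (fun i => p i = 1)).card = U} ≃
      {s : Finset (Fin N) // s.card = U} :=
    { toFun := fun p => ⟨univ.filter (fun i => p.1 i = 1), p.2.2⟩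
      invFun := fun s => ⟨fun i => if i ∈ s.1 then 1 else -(r : ℤ),
        fun i => by by_cases h : i ∈ s.1 <;> simp [h], by
          have hf : univ.filter (fun i => (if i ∈ s.1 then (1 : ℤ) else -(r : ℤ)) = 1) = s.1 := by
            ext i
            by_cases h : i ∈ s.1 <;> simp [h]
            omega
          rw [hf]; exact s.2⟩
      left_inv := fun p => by
        apply Subtype.ext
        funext i
        rcases p.2.1 i with h | h <;> simp [h]
        omega
      right_inv := fun s => by
        apply Subtype.ext
        ext i
        by_cases h : i ∈ s.1 <;> simp [h]
        omega }
  have hΩ : Nat.card {p : Fin N → ℤ // (∀ i, p i = 1 ∨ p i = -(r : ℤ)) ∧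
      (univ.filter (fun i => p i = 1)).card = U} = N.choose U := by
    rw [Nat.card_congr e, Nat.card_eq_fintype_card, Fintype.card_finset_len, Fintype.card_fin]
  have hch : N.choose U = N.choose n := by
    clear hΩ e
    rw [show U = N - n by omega]
    exact Nat.choose_symm (by omega)
  -- the bijection
  let Φ : ({p : Fin N → ℤ //
      (∀ i, p i = 1 ∨ p i = -(r : ℤ)) ∧
      (univ.filter (fun i => p i = 1)).card = U ∧
      (((Finset.range N).filter (fun m => psum p m ≤ 0)).card = k)} × Fin N) →
      {p : Fin N → ℤ // (∀ i, p i = 1 ∨ p i = -(r : ℤ)) ∧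
        (univ.filter (fun i => p i = 1)).card = U} :=
    fun qt => ⟨CF.rot qt.2 qt.1.1, fun i => qt.1.2.1 _, by
      rw [rot_ups]; exact qt.1.2.2.1⟩
  have hinjΦ : Function.Injective Φ := by
    rintro ⟨q1, t1⟩ ⟨q2, t2⟩ h
    have h' : CF.rot t1 q1.1 = CF.rot t2 q2.1 := congrArg Subtype.val h
    have hs1 : psum q1.1 N = 1 := hsum _ q1.2.1 q1.2.2.1
    have h2 : CF.rot (-t2 + t1) q1.1 = q2.1 := by
      have := congrArg (CF.rot (-t2)) h'
      rwa [CF.rot_rot, CF.rot_rot, neg_add_cancel, CF.rot_zero] at this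
    have h3 : CF.cnt (CF.rot (-t2 + t1) q1.1) = k := by rw [h2]; exact q2.2.2.2
    have h4 : CF.cnt (CF.rot 0 q1.1) = k := by rw [CF.rot_zero]; exact q1.2.2.2
    have h5 : -t2 + t1 = (0 : Fin N) := by
      apply CF.rk_injective q1.1
      rw [← CF.cnt_rot q1.1 hs1, ← CF.cnt_rot q1.1 hs1, h3, h4]
    have ht : t2 = t1 := neg_add_eq_zero.mp h5
    have hq : q1 = q2 := by
      apply Subtype.ext
      rw [← h2, h5, CF.rot_zero]
    rw [ht, hq]
  have hsurjΦ : Function.Surjective Φ := by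
    rintro ⟨p, hp1, hp2⟩
    have hs : psum p N = 1 := hsum p hp1 hp2
    obtain ⟨t, ht⟩ := exists_t p hs
    refine ⟨⟨⟨CF.rot t p, fun i => hp1 _, by rw [rot_ups]; exact hp2, ht⟩, -t⟩, ?_⟩
    apply Subtype.ext
    show CF.rot (-t) (CF.rot t p) = p
    rw [CF.rot_rot, neg_add_cancel, CF.rot_zero]
  have hcard := Nat.card_eq_of_bijective Φ ⟨hinjΦ, hsurjΦ⟩
  rw [Nat.card_prod, Nat.card_eq_fintype_card (α := Fin N), Fintype.card_fin] at hcard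
  clear hinjΦ hsurjΦ
  clear Φ
  rw [hcard, hΩ, hch]
end

section
/- Let r ≥ 1 and n ≥ 1. For each k with 0 ≤ k ≤ rn, the number of paths p in 𝒫(n,r,0) with exactly k up steps starting strictly below the x-axis equals (1/(rn+1))·C((r+1)n, n); in particular this count is independent of k. -/
set_option linter.unusedSectionVars false
open Finset
open Fin.NatCast Fin.CommRing

section
variable {M : ℕ} [NeZero M]

def rot (c : Fin M) (q : Fin M → ℤ) : Fin M → ℤ := fun i => q (i + c)

def D (q : Fin M → ℤ) (t i : Fin M) : ℤ :=
  ∑ m ∈ Finset.range ((i - t : Fin M) : ℕ), q (t + (m : Fin M))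

def rnk (q : Fin M → ℤ) (t : Fin M) : ℕ :=
  (univ.filter fun i => q i = 1 ∧ i ≠ t ∧ D q t i ≤ 0).card

variable (q : Fin M → ℤ)

lemma psum_zero : psum q 0 = 0 := by simp [psum]

lemma psum_succ (m : ℕ) (h : m < M) :
    psum q (m + 1) = psum q m + q ((m : ℕ) : Fin M) := by
  have hins : (univ.filter (fun j : Fin M => (j : ℕ) < m + 1)) =
      insert ((m : ℕ) : Fin M) (univ.filter (fun j : Fin M => (j : ℕ) < m)) := by
    ext j
    simp only [mem_filter, mem_univ, true_and, mem_insert]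
    rw [Fin.ext_iff, Fin.val_cast_of_lt h]
    omega
  rw [psum, hins, Finset.sum_insert (by simp [Fin.val_cast_of_lt h]), add_comm, psum]

lemma psum_of_ge (m : ℕ) (h : M ≤ m) : psum q m = psum q M := by
  unfold psum
  apply Finset.sum_congr _ (fun _ _ => rfl)
  apply Finset.filter_congr
  intro j _
  constructor <;> intro <;> [omega; omega]

lemma range_sum_eq (a : ℕ) (ℓ : ℕ) (h : a + ℓ ≤ M) :
    (∑ m ∈ Finset.range ℓ, q ((a + m : ℕ) : Fin M)) = psum q (a + ℓ) - psum q a := by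
  induction ℓ with
  | zero => simp
  | succ ℓ ih =>
      rw [Finset.sum_range_succ, ih (by omega), ← add_assoc,
        psum_succ q (a + ℓ) (by omega)]
      ring
end

section
variable {M : ℕ} [NeZero M] (q : Fin M → ℤ)

lemma sum_range_split (f : ℕ → ℤ) (u v : ℕ) :
    ∑ m ∈ Finset.range (u + v), f m
      = ∑ m ∈ Finset.range u, f m + ∑ m ∈ Finset.range v, f (u + m) := by
  induction v with
  | zero => simp
  | succ v ih => rw [← add_assoc, Finset.sum_range_succ, ih, Finset.sum_range_succ, add_assoc]

lemma cast_add_step (t : Fin M) (m : ℕ) : t + (m : Fin M) = ((t.val + m : ℕ) : Fin M) := by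
  push_cast
  rfl

lemma D_eq_of_le (t i : Fin M) (h : (t : ℕ) ≤ (i : ℕ)) :
    D q t i = psum q i - psum q t := by
  have h1 := i.isLt
  have h2 := t.isLt
  have hl : ((i - t : Fin M) : ℕ) = (i : ℕ) - (t : ℕ) := by
    rw [Fin.sub_def]
    show (M - (t:ℕ) + (i:ℕ)) % M = _
    have he : M - (t:ℕ) + (i:ℕ) = ((i:ℕ) - (t:ℕ)) + M := by omega
    rw [he, Nat.add_mod_right, Nat.mod_eq_of_lt (by omega)]
  rw [D, hl]
  rw [Finset.sum_congr rfl (fun m _ => by rw [cast_add_step])]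
  rw [range_sum_eq q t.val _ (by omega), Nat.add_sub_cancel' h]

lemma D_eq_of_gt (t i : Fin M) (h : (i : ℕ) < (t : ℕ)) :
    D q t i = psum q i - psum q t + psum q M := by
  have h1 := i.isLt
  have h2 := t.isLt
  have hl : ((i - t : Fin M) : ℕ) = (M - (t : ℕ)) + (i : ℕ) := by
    rw [Fin.sub_def]
    show (M - (t:ℕ) + (i:ℕ)) % M = _
    rw [Nat.mod_eq_of_lt (by omega)]
  rw [D, hl]
  rw [Finset.sum_congr rfl (fun m _ => by rw [cast_add_step])]
  rw [sum_range_split]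
  rw [range_sum_eq q t.val _ (by omega)]
  have hc : ∀ m : ℕ, (((t : ℕ) + ((M - (t : ℕ)) + m) : ℕ) : Fin M) = ((0 + m : ℕ) : Fin M) := by
    intro m
    have : (t : ℕ) + ((M - (t : ℕ)) + m) = M + m := by omega
    rw [this]
    push_cast
    simp
  rw [Finset.sum_congr rfl (fun m _ => by rw [hc])]
  rw [range_sum_eq q 0 _ (by omega)]
  have ht : (t:ℕ) + (M - (t:ℕ)) = M := by omega
  rw [ht, Nat.zero_add, psum_zero]
  ring
end

def keyLt (a b : ℤ × ℤ) : Prop := a.1 < b.1 ∨ (a.1 = b.1 ∧ a.2 < b.2)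

instance : DecidableRel keyLt := fun a b => by unfold keyLt; exact inferInstance

def key {M : ℕ} (q : Fin M → ℤ) (i : Fin M) : ℤ × ℤ := (psum q (i : ℕ), -((i : ℕ) : ℤ))

lemma keyLt_trans {a b c : ℤ × ℤ} (h1 : keyLt a b) (h2 : keyLt b c) : keyLt a c := by
  unfold keyLt at *
  omega

lemma keyLt_irrefl (a : ℤ × ℤ) : ¬ keyLt a a := by
  unfold keyLt
  omega

lemma keyLt_total {a b : ℤ × ℤ} (h : a.2 ≠ b.2) : keyLt a b ∨ keyLt b a := by
  unfold keyLt
  omega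

lemma key_snd_ne {M : ℕ} (q : Fin M → ℤ) {i j : Fin M} (h : i ≠ j) :
    (key q i).2 ≠ (key q j).2 := by
  simp only [key]
  intro hc
  apply h
  apply Fin.ext
  omega

section
variable {M : ℕ} [NeZero M] (q : Fin M → ℤ)

lemma D_le_iff (hsum1 : psum q M = 1) (t i : Fin M) (hne : i ≠ t) :
    D q t i ≤ 0 ↔ keyLt (key q i) (key q t) := by
  rcases lt_trichotomy (i : ℕ) (t : ℕ) with h | h | h
  · rw [D_eq_of_gt q t i h, hsum1]
    simp only [keyLt, key]
    omega
  · exact absurd (Fin.ext h) hne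
  · rw [D_eq_of_le q t i (le_of_lt h)]
    simp only [keyLt, key]
    omega

lemma rnk_eq_key (hsum1 : psum q M = 1) (t : Fin M) :
    rnk q t = (univ.filter fun i => q i = 1 ∧ keyLt (key q i) (key q t)).card := by
  unfold rnk
  congr 1
  apply Finset.filter_congr
  intro i _
  constructor
  · rintro ⟨h1, h2, h3⟩
    exact ⟨h1, (D_le_iff q hsum1 t i h2).1 h3⟩
  · rintro ⟨h1, h2⟩
    have hne : i ≠ t := by
      rintro rfl
      exact keyLt_irrefl _ h2
    exact ⟨h1, hne, (D_le_iff q hsum1 t i hne).2 h2⟩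

lemma rnk_lt (hsum1 : psum q M = 1) (t : Fin M) (ht : q t = 1) :
    rnk q t < (univ.filter fun i => q i = 1).card := by
  rw [rnk_eq_key q hsum1 t]
  have hsub : (univ.filter fun i => q i = 1 ∧ keyLt (key q i) (key q t))
      ⊆ (univ.filter fun i => q i = 1).erase t := by
    intro i hi
    simp only [mem_filter, mem_univ, true_and] at hi
    rw [Finset.mem_erase]
    refine ⟨?_, by simp [hi.1]⟩
    rintro rfl
    exact keyLt_irrefl _ hi.2
  have h1 := Finset.card_le_card hsub
  have h2 : t ∈ univ.filter fun i => q i = 1 := by simp [ht]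
  have h3 := Finset.card_erase_of_mem h2
  have h4 : 0 < (univ.filter fun i => q i = 1).card := Finset.card_pos.2 ⟨t, h2⟩
  omega

lemma rnk_injOn (hsum1 : psum q M = 1) {t t' : Fin M} (ht : q t = 1) (ht' : q t' = 1)
    (hne : t ≠ t') : rnk q t ≠ rnk q t' := by
  have key_ne := key_snd_ne q hne
  have main : ∀ a b : Fin M, q a = 1 → q b = 1 → keyLt (key q a) (key q b) →
      rnk q a < rnk q b := by
    intro a b ha hb hab
    rw [rnk_eq_key q hsum1 a, rnk_eq_key q hsum1 b]
    apply Finset.card_lt_card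
    rw [Finset.ssubset_iff_of_subset]
    · exact ⟨a, by simp [ha, hab], by simp [keyLt_irrefl]⟩
    · intro i hi
      simp only [mem_filter, mem_univ, true_and] at hi ⊢
      exact ⟨hi.1, keyLt_trans hi.2 hab⟩
  rcases keyLt_total key_ne with h | h
  · exact Nat.ne_of_lt (main _ _ ht ht' h)
  · exact Nat.ne_of_gt (main _ _ ht' ht h)

theorem rank_exists (hsum1 : psum q M = 1) (k : ℕ)
    (hk : k < (univ.filter fun i => q i = 1).card) :
    ∃ t : Fin M, q t = 1 ∧ rnk q t = k := by
  have := Finset.surj_on_of_inj_on_of_card_le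
    (s := univ.filter fun i => q i = 1)
    (t := Finset.range ((univ.filter fun i => q i = 1).card))
    (fun a _ => rnk q a)
    (fun a ha => by
      simp only [Finset.mem_range]
      exact rnk_lt q hsum1 a (by simpa using ha))
    (fun a b ha hb hab => by
      by_contra hne
      exact rnk_injOn q hsum1 (by simpa using ha) (by simpa using hb) hne hab)
    (by rw [Finset.card_range])
    k (by simpa using hk)
  obtain ⟨a, ha, hak⟩ := this
  exact ⟨a, by simpa using ha, hak.symm⟩
end

section
variable {M : ℕ} [NeZero M] (q : Fin M → ℤ)

lemma D_rot (c t i : Fin M) : D (rot c q) t i = D q (t + c) (i + c) := by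
  unfold D rot
  have h1 : i + c - (t + c) = i - t := by ring
  rw [h1]
  exact Finset.sum_congr rfl fun m _ => by rw [add_right_comm]

lemma rnk_rot (c t : Fin M) : rnk (rot c q) t = rnk q (t + c) := by
  unfold rnk
  apply Finset.card_nbij' (fun i => i + c) (fun j => j - c)
  · intro a ha
    simp only [mem_coe, mem_filter, mem_univ, true_and] at ha ⊢
    refine ⟨ha.1, ?_, by rw [← D_rot]; exact ha.2.2⟩
    intro hc
    exact ha.2.1 (by rwa [add_left_inj] at hc)
  · intro a ha
    simp only [mem_coe, mem_filter, mem_univ, true_and] at ha ⊢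
    have hac : a - c + c = a := by ring
    refine ⟨?_, ?_, ?_⟩
    · show q (a - c + c) = 1
      rw [hac]
      exact ha.1
    · intro hc
      apply ha.2.1
      rw [← hac, hc]
    · rw [D_rot, hac]
      exact ha.2.2
  · intro a _
    ring
  · intro a _
    ring

lemma ups_card_rot (c : Fin M) :
    (univ.filter fun i => rot c q i = 1).card = (univ.filter fun i => q i = 1).card := by
  apply Finset.card_nbij' (fun i => i + c) (fun j => j - c)
  · intro a ha
    simp only [mem_coe, mem_filter, mem_univ, true_and] at ha ⊢
    exact ha
  · intro a ha
    simp only [mem_coe, mem_filter, mem_univ, true_and] at ha ⊢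
    show q (a - c + c) = 1
    rwa [sub_add_cancel]
  · intro a _
    ring
  · intro a _
    ring

end

section
variable {ν : ℕ}

lemma cons_ups_card (p : Fin ν → ℤ) :
    (univ.filter fun i => (Fin.cons 1 p : Fin (ν+1) → ℤ) i = 1).card
      = 1 + (univ.filter fun i => p i = 1).card := by
  rw [Finset.card_filter, Finset.card_filter, Fin.sum_univ_succ]
  simp [Fin.cons_zero, Fin.cons_succ]

lemma cons_psum (p : Fin ν → ℤ) (m : ℕ) :
    psum ((Fin.cons 1 p : Fin (ν+1) → ℤ)) (m+1) = 1 + psum p m := by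
  unfold psum
  rw [Finset.sum_filter, Finset.sum_filter, Fin.sum_univ_succ]
  simp only [Fin.cons_zero, Fin.cons_succ, Fin.val_zero, Fin.val_succ]
  rw [if_pos (Nat.succ_pos m)]
  congr 1
  apply Finset.sum_congr rfl
  intro j _
  simp only [Nat.add_lt_add_iff_right]

lemma cons_rnk (p : Fin ν → ℤ) :
    rnk ((Fin.cons 1 p : Fin (ν+1) → ℤ)) 0 = (univ.filter fun i => p i = 1 ∧ psum p (i:ℕ) < 0).card := by
  unfold rnk
  rw [Finset.card_filter, Finset.card_filter, Fin.sum_univ_succ]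
  have h0 : (if (Fin.cons 1 p : Fin (ν+1) → ℤ) 0 = 1 ∧ (0:Fin (ν+1)) ≠ 0 ∧ D ((Fin.cons 1 p : Fin (ν+1) → ℤ)) 0 0 ≤ 0
      then 1 else 0) = 0 := by simp
  rw [h0, zero_add]
  apply Finset.sum_congr rfl
  intro j _
  have hD : D ((Fin.cons 1 p : Fin (ν+1) → ℤ)) 0 j.succ = psum ((Fin.cons 1 p : Fin (ν+1) → ℤ)) ((j.succ : ℕ)) := by
    rw [D_eq_of_le _ _ _ (by simp)]
    rw [Fin.val_zero, psum_zero, sub_zero]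
  rw [hD, Fin.val_succ, cons_psum]
  simp only [Fin.cons_succ]
  have hiff : (p j = 1 ∧ j.succ ≠ 0 ∧ 1 + psum p (j:ℕ) ≤ 0) ↔ (p j = 1 ∧ psum p (j:ℕ) < 0) := by
    constructor
    · rintro ⟨h1, _, h3⟩
      exact ⟨h1, by omega⟩
    · rintro ⟨h1, h2⟩
      exact ⟨h1, Fin.succ_ne_zero j, by omega⟩
  rw [if_congr hiff rfl rfl]

lemma cons_vals (r : ℕ) (p : Fin ν → ℤ) (hval : ∀ i, p i = 1 ∨ p i = -(r:ℤ)) :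
    ∀ i, (Fin.cons 1 p : Fin (ν+1) → ℤ) i = 1 ∨ (Fin.cons 1 p : Fin (ν+1) → ℤ) i = -(r:ℤ) := by
  intro i
  refine Fin.cases ?_ ?_ i
  · left
    simp
  · intro j
    simpa using hval j
end

section
variable {M : ℕ} [NeZero M] (q : Fin M → ℤ)

lemma psum_total (r : ℕ) (hval : ∀ i, q i = 1 ∨ q i = -(r:ℤ)) :
    psum q M = ((univ.filter fun i => q i = 1).card : ℤ) * 1
      + ((univ.filter fun i => ¬ q i = 1).card : ℤ) * (-(r:ℤ)) := by
  have huniv : univ.filter (fun j : Fin M => (j:ℕ) < M) = univ :=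
    Finset.filter_true_of_mem (fun j _ => j.isLt)
  rw [psum, huniv, ← Finset.sum_filter_add_sum_filter_not univ (fun i => q i = 1)]
  congr 1
  · rw [Finset.sum_congr rfl (fun i hi => (Finset.mem_filter.1 hi).2), Finset.sum_const]
    simp
  · rw [Finset.sum_congr rfl (fun i hi => ((hval i).resolve_left (Finset.mem_filter.1 hi).2)),
      Finset.sum_const]
    simp [mul_comm]

lemma card_not_ups :
    (univ.filter fun i => ¬ q i = 1).card = M - (univ.filter fun i => q i = 1).card := by
  have := Finset.card_filter_add_card_filter_not (s := (univ : Finset (Fin M)))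
    (p := fun i => q i = 1)
  simp only [Finset.card_univ, Fintype.card_fin] at this
  omega
end

section main
variable (r n k : ℕ)

def QT := {q : Fin ((r+1)*n+1) → ℤ // (∀ i, q i = 1 ∨ q i = -(r:ℤ)) ∧
  (univ.filter (fun i => q i = 1)).card = r*n+1 ∧ q 0 = 1 ∧ rnk q 0 = k}

def PT := {x : (Fin ((r+1)*n+1) → ℤ) × Fin ((r+1)*n+1) //
  (∀ i, x.1 i = 1 ∨ x.1 i = -(r:ℤ)) ∧
  (univ.filter (fun i => x.1 i = 1)).card = r*n+1 ∧ x.1 x.2 = 1 ∧ rnk x.1 x.2 = k}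

def WT := {q : Fin ((r+1)*n+1) → ℤ // (∀ i, q i = 1 ∨ q i = -(r:ℤ)) ∧
  (univ.filter (fun i => q i = 1)).card = r*n+1}

def e1 : {p : Fin ((r+1)*n) → ℤ //
      (∀ i, p i = 1 ∨ p i = -(r : ℤ)) ∧
      (univ.filter (fun i => p i = 1)).card = r*n ∧
      (univ.filter (fun i : Fin ((r+1)*n) => p i = 1 ∧ psum p (i : ℕ) < 0)).card = k }
    ≃ QT r n k where
  toFun p := ⟨(Fin.cons 1 p.1 : Fin ((r+1)*n+1) → ℤ),
    cons_vals r p.1 p.2.1,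
    by rw [cons_ups_card, p.2.2.1, Nat.add_comm],
    Fin.cons_zero _ _,
    by rw [cons_rnk, p.2.2.2]⟩
  invFun q := ⟨fun j => q.1 j.succ, by
    have hq : q.1 = (Fin.cons 1 (fun j => q.1 j.succ) : Fin ((r+1)*n+1) → ℤ) := by
      funext i
      refine Fin.cases ?_ ?_ i
      · rw [Fin.cons_zero]
        exact q.2.2.2.1
      · intro j
        rw [Fin.cons_succ]
    refine ⟨fun j => q.2.1 j.succ, ?_, ?_⟩
    · have hups := q.2.2.1
      rw [hq, cons_ups_card] at hups
      show (univ.filter (fun i : Fin ((r+1)*n) => (fun j => q.1 j.succ) i = 1)).card = r*n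
      set x := (univ.filter (fun i : Fin ((r+1)*n) => (fun j => q.1 j.succ) i = 1)).card with hx
      omega
    · have hrnk := q.2.2.2.2
      rw [hq, cons_rnk] at hrnk
      exact hrnk⟩
  left_inv p := Subtype.ext (funext fun j =>
    show (Fin.cons 1 p.1 : Fin ((r+1)*n+1) → ℤ) j.succ = p.1 j from Fin.cons_succ _ _ _)
  right_inv q := Subtype.ext (by
    show (Fin.cons 1 (fun j => q.1 j.succ) : Fin ((r+1)*n+1) → ℤ) = q.1
    funext i
    refine Fin.cases ?_ ?_ i
    · rw [Fin.cons_zero]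
      exact q.2.2.2.1.symm
    · intro j
      rw [Fin.cons_succ])

def e2 : (Fin ((r+1)*n+1)) × QT r n k ≃ PT r n k where
  toFun cq := ⟨(rot (-cq.1) cq.2.1, cq.1),
    fun i => cq.2.2.1 (i + -cq.1),
    (ups_card_rot cq.2.1 (-cq.1)).trans cq.2.2.2.1,
    by show cq.2.1 (cq.1 + -cq.1) = 1; rw [add_neg_cancel]; exact cq.2.2.2.2.1,
    by rw [rnk_rot, add_neg_cancel]; exact cq.2.2.2.2.2⟩
  invFun x := ⟨x.1.2, ⟨rot x.1.2 x.1.1,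
    fun i => x.2.1 (i + x.1.2),
    (ups_card_rot x.1.1 x.1.2).trans x.2.2.1,
    by show x.1.1 (0 + x.1.2) = 1; rw [zero_add]; exact x.2.2.2.1,
    by rw [rnk_rot, zero_add]; exact x.2.2.2.2⟩⟩
  left_inv cq := by
    refine Prod.ext rfl (Subtype.ext ?_)
    funext i
    show cq.2.1 (i + cq.1 + -cq.1) = cq.2.1 i
    rw [add_neg_cancel_right]
  right_inv x := by
    refine Subtype.ext (Prod.ext ?_ rfl)
    funext i
    show x.1.1 (i + -x.1.2 + x.1.2) = x.1.1 i
    rw [neg_add_cancel_right]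

lemma W_hsum1 (q : Fin ((r+1)*n+1) → ℤ) (hval : ∀ i, q i = 1 ∨ q i = -(r:ℤ))
    (hcard : (univ.filter (fun i => q i = 1)).card = r*n+1) :
    psum q ((r+1)*n+1) = 1 := by
  rw [psum_total q r hval, card_not_ups, hcard]
  have hM : (r+1)*n+1 - (r*n+1) = n := by
    have : (r+1)*n = r*n + n := by ring
    omega
  rw [hM]
  push_cast
  ring

def fPW : PT r n k → WT r n := fun x => ⟨x.1.1, x.2.1, x.2.2.1⟩

lemma fPW_bijective (hk : k ≤ r*n) : Function.Bijective (fPW r n k) := by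
  constructor
  · rintro ⟨⟨q, t⟩, hval, hcard, ht1, ht2⟩ ⟨⟨q', t'⟩, hval', hcard', ht1', ht2'⟩ h
    have hq : q = q' := congrArg Subtype.val h
    subst hq
    have hsum1 := W_hsum1 r n q hval hcard
    have : t = t' := by
      by_contra hne
      exact rnk_injOn q hsum1 ht1 ht1' hne (ht2.trans ht2'.symm)
    subst this
    rfl
  · rintro ⟨q, hval, hcard⟩
    have hsum1 := W_hsum1 r n q hval hcard
    obtain ⟨t, ht1, ht2⟩ := rank_exists q hsum1 k (by rw [hcard]; omega)
    exact ⟨⟨(q, t), hval, hcard, ht1, ht2⟩, rfl⟩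

def e4 (hr : 1 ≤ r) : WT r n ≃ {s : Finset (Fin ((r+1)*n+1)) // s.card = r*n+1} where
  toFun q := ⟨univ.filter (fun i => q.1 i = 1), q.2.2⟩
  invFun s := ⟨fun i => if i ∈ s.1 then 1 else -(r:ℤ), by
    have hne : -(r:ℤ) ≠ 1 := by
      have : (1:ℤ) ≤ (r:ℤ) := by exact_mod_cast hr
      omega
    constructor
    · intro i
      show (if i ∈ s.1 then (1:ℤ) else -(r:ℤ)) = 1 ∨ (if i ∈ s.1 then (1:ℤ) else -(r:ℤ)) = -(r:ℤ)
      split_ifs <;> simp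
    · rw [show (univ.filter (fun i => (if i ∈ s.1 then (1:ℤ) else -(r:ℤ)) = 1)) = s.1 from ?_]
      · exact s.2
      · ext i
        simp only [mem_filter, mem_univ, true_and]
        split_ifs with h <;> simp [h, hne]⟩
  left_inv q := Subtype.ext (by
    funext i
    show (if i ∈ univ.filter (fun i => q.1 i = 1) then (1:ℤ) else -(r:ℤ)) = q.1 i
    rcases q.2.1 i with h | h
    · rw [if_pos (by simp [h]), h]
    · have hne : -(r:ℤ) ≠ 1 := by
        have : (1:ℤ) ≤ (r:ℤ) := by exact_mod_cast hr
        omega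
      rw [if_neg (by simp [h, hne]), h])
  right_inv s := Subtype.ext (by
    have hne : -(r:ℤ) ≠ 1 := by
      have : (1:ℤ) ≤ (r:ℤ) := by exact_mod_cast hr
      omega
    show univ.filter (fun i => (fun i => if i ∈ s.1 then (1:ℤ) else -(r:ℤ)) i = 1) = s.1
    ext i
    simp only [mem_filter, mem_univ, true_and]
    split_ifs with h <;> simp [h, hne])

end main

/-- Among paths in 𝒫(n,r,0) (steps +1 or −r, with rn up steps and n down steps),
for each `0 ≤ k ≤ rn` the number with exactly `k` up steps starting strictly below
the x-axis is `(1/(rn+1))·C((r+1)n,n)`; in particular this count is independent of `k`. -/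
theorem generalized_catalan_chung_feller_classical (r n : ℕ) (hr : 1 ≤ r) (hn : 1 ≤ n)
    (k : ℕ) (hk : k ≤ r*n) :
    Nat.card {p : Fin ((r+1)*n) → ℤ //
      (∀ i, p i = 1 ∨ p i = -(r : ℤ)) ∧
      (univ.filter (fun i => p i = 1)).card = r*n ∧
      (univ.filter (fun i : Fin ((r+1)*n) => p i = 1 ∧ psum p (i : ℕ) < 0)).card = k }
      * (r*n + 1) = Nat.choose ((r+1)*n) n := by
  rw [Nat.card_congr (e1 r n k)]
  have h2 : Nat.card (PT r n k) = ((r+1)*n+1) * Nat.card (QT r n k) := by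
    rw [← Nat.card_congr (e2 r n k), Nat.card_prod, Nat.card_eq_fintype_card, Fintype.card_fin]
  have h3 : Nat.card (PT r n k) = Nat.card (WT r n) :=
    Nat.card_eq_of_bijective _ (fPW_bijective r n k hk)
  have h4 : Nat.card (WT r n) = Nat.choose ((r+1)*n+1) (r*n+1) := by
    rw [Nat.card_congr (e4 r n hr), Nat.card_eq_fintype_card, Fintype.card_finset_len,
      Fintype.card_fin]
  have h5 : ((r+1)*n+1) * Nat.card (QT r n k) = Nat.choose ((r+1)*n+1) (r*n+1) := by
    rw [← h2, h3, h4]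
  have hsym : Nat.choose ((r+1)*n) (r*n) = Nat.choose ((r+1)*n) n := by
    have hle : r*n ≤ (r+1)*n := by
      have : (r+1)*n = r*n + n := by ring
      omega
    have h := Nat.choose_symm hle
    rw [show (r+1)*n - r*n = n from by
      have : (r+1)*n = r*n + n := by ring
      omega] at h
    exact h.symm
  have hmul : ((r+1)*n+1) * Nat.choose ((r+1)*n) (r*n)
      = Nat.choose ((r+1)*n+1) (r*n+1) * (r*n+1) := Nat.add_one_mul_choose_eq _ _
  apply Nat.eq_of_mul_eq_mul_left (Nat.succ_pos ((r+1)*n))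
  calc ((r+1)*n+1) * (Nat.card (QT r n k) * (r*n+1))
      = (((r+1)*n+1) * Nat.card (QT r n k)) * (r*n+1) := by ring
    _ = Nat.choose ((r+1)*n+1) (r*n+1) * (r*n+1) := by rw [h5]
    _ = ((r+1)*n+1) * Nat.choose ((r+1)*n) (r*n) := hmul.symm
    _ = ((r+1)*n+1) * Nat.choose ((r+1)*n) n := by rw [hsym]
end

section
/- Let r ≥ 1 and n ≥ 1, and let n_0, n_1, …, n_r be nonnegative integers with n_0 ≥ 1 and n_0 + n_1 + ⋯ + n_r = nr + 1. For each j with 1 ≤ j ≤ n_0, the number of paths p in 𝒫(n−1,r,r+1) with p_1 = +1 that have exactly n_i up steps in positions congruent to i modulo r+1 for each i = 0,…,r, and exactly j up steps in positions congruent to 0 modulo r+1 starting on or below the x-axis, equals (1/n_0)·C(n−1, n_0−1)·∏_{i=1}^{r} C(n, n_i); in particular this count is independent of j. -/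
open Finset

namespace GN

/-- number of up-steps of `p` in window `[A, B)`. -/
def cnt {N : ℕ} (p : Fin N → ℤ) (A B : ℕ) : ℕ :=
  (univ.filter (fun a : Fin N => p a = 1 ∧ A ≤ (a:ℕ) ∧ (a:ℕ) < B)).card

lemma card_val_lt {N : ℕ} {m : ℕ} (hm : m ≤ N) :
    (univ.filter (fun a : Fin N => (a:ℕ) < m)).card = m := by
  have : (univ.filter (fun a : Fin N => (a:ℕ) < m))
      = (Finset.range m).attachFin (fun x hx => lt_of_lt_of_le (mem_range.mp hx) hm) := by
    ext a; simp [Finset.mem_attachFin]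
  rw [this, Finset.card_attachFin, Finset.card_range]

lemma cnt_split {N : ℕ} (p : Fin N → ℤ) {A B C : ℕ} (h1 : A ≤ B) (h2 : B ≤ C) :
    cnt p A C = cnt p A B + cnt p B C := by
  unfold cnt
  rw [← Finset.card_union_of_disjoint]
  · congr 1
    rw [Finset.filter_union_right]
    apply Finset.filter_congr
    intro a _
    constructor
    · rintro ⟨h, h3, h4⟩
      by_cases hb : (a:ℕ) < B
      · exact Or.inl ⟨h, h3, hb⟩
      · exact Or.inr ⟨h, by omega, h4⟩
    · rintro (⟨h, h3, h4⟩ | ⟨h, h3, h4⟩) <;> exact ⟨h, by omega, by omega⟩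
  · apply Finset.disjoint_filter_filter'
    rw [disjoint_iff_inf_le]
    rintro a ⟨⟨_, _, h4⟩, ⟨_, h5, _⟩⟩
    omega

lemma cnt_top {N : ℕ} (p : Fin N → ℤ) :
    cnt p 0 N = (univ.filter (fun a : Fin N => p a = 1)).card := by
  unfold cnt
  congr 1
  apply Finset.filter_congr
  intro a _
  simp [a.isLt]

lemma psum_eq {N : ℕ} {r : ℕ} (p : Fin N → ℤ) (hp : ∀ a, p a = 1 ∨ p a = -(r:ℤ))
    {m : ℕ} (hm : m ≤ N) :
    psum p m = (r+1) * (cnt p 0 m : ℤ) - r * m := by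
  unfold psum
  have key : ∀ a : Fin N, p a = (r+1) * (if p a = 1 then (1:ℤ) else 0) - r := by
    intro a
    rcases hp a with h | h <;> rw [h]
    · simp
    · rw [if_neg (by omega)]; ring
  calc ∑ a ∈ univ.filter (fun a : Fin N => (a:ℕ) < m), p a
      = ∑ a ∈ univ.filter (fun a : Fin N => (a:ℕ) < m),
          ((r+1) * (if p a = 1 then (1:ℤ) else 0) - r) := by
        exact Finset.sum_congr rfl (fun a _ => key a)
    _ = (r+1) * (∑ a ∈ univ.filter (fun a : Fin N => (a:ℕ) < m),
          (if p a = 1 then (1:ℤ) else 0))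
        - r * ((univ.filter (fun a : Fin N => (a:ℕ) < m)).card : ℤ) := by
        rw [Finset.sum_sub_distrib, Finset.mul_sum, Finset.sum_const]
        simp [mul_comm]
    _ = (r+1) * (cnt p 0 m : ℤ) - r * m := by
        rw [Finset.sum_boole, card_val_lt hm]
        unfold cnt
        norm_cast
        congr 2
        rw [Finset.filter_filter]
        congr 1
        apply Finset.filter_congr
        intro a _
        constructor
        · rintro ⟨h1, h2⟩; exact ⟨h2, by omega, h1⟩
        · rintro ⟨h1, _, h2⟩; exact ⟨h2, h1⟩


/-- rotate `p` left by `t`. -/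
def rot {N : ℕ} (hN : 0 < N) (t : ℕ) (p : Fin N → ℤ) : Fin N → ℤ :=
  fun a => p ⟨((a:ℕ) + t) % N, Nat.mod_lt _ hN⟩

lemma rot_rot {N : ℕ} (hN : 0 < N) (s t : ℕ) (p : Fin N → ℤ) :
    rot hN t (rot hN s p) = rot hN (t + s) p := by
  funext a
  unfold rot
  congr 1
  apply Fin.ext
  show (((a:ℕ) + t) % N + s) % N = ((a:ℕ) + (t + s)) % N
  rw [Nat.mod_add_mod, Nat.add_assoc]

lemma rot_self {N : ℕ} (hN : 0 < N) (p : Fin N → ℤ) : rot hN N p = p := by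
  funext a
  unfold rot
  congr 1
  apply Fin.ext
  show ((a:ℕ) + N) % N = (a:ℕ)
  rw [Nat.add_mod_right, Nat.mod_eq_of_lt a.isLt]

lemma rot_inv {N : ℕ} (hN : 0 < N) {t t' : ℕ} (h : t + t' = N) (p : Fin N → ℤ) :
    rot hN t' (rot hN t p) = p := by
  rw [rot_rot, Nat.add_comm, h, rot_self]

lemma rot_steps {N : ℕ} (hN : 0 < N) (t : ℕ) {r : ℕ} {p : Fin N → ℤ}
    (hp : ∀ a, p a = 1 ∨ p a = -(r:ℤ)) : ∀ a, rot hN t p a = 1 ∨ rot hN t p a = -(r:ℤ) :=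
  fun _ => hp _

lemma cnt_rot_nowrap {N : ℕ} (hN : 0 < N) (t : ℕ) (p : Fin N → ℤ) {A B A' B' : ℕ}
    (hA : A + t = A') (hB : B + t = B') (hB' : B' ≤ N) :
    cnt (rot hN t p) A B = cnt p A' B' := by
  unfold cnt
  apply Finset.card_nbij' (fun a : Fin N => (⟨((a:ℕ) + t) % N, Nat.mod_lt _ hN⟩ : Fin N))
    (fun b : Fin N => (⟨((b:ℕ) - t) % N, Nat.mod_lt _ hN⟩ : Fin N))
  · intro a ha
    simp only [Finset.mem_coe, Finset.mem_filter, Finset.mem_univ, true_and] at ha ⊢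
    obtain ⟨h1, h2, h3⟩ := ha
    have hm : ((a:ℕ) + t) % N = (a:ℕ) + t := Nat.mod_eq_of_lt (by omega)
    refine ⟨h1, ?_, ?_⟩ <;> rw [hm] <;> omega
  · intro b hb
    simp only [Finset.mem_coe, Finset.mem_filter, Finset.mem_univ, true_and] at hb ⊢
    obtain ⟨h1, h2, h3⟩ := hb
    have hm : ((b:ℕ) - t) % N = (b:ℕ) - t := Nat.mod_eq_of_lt (by omega)
    refine ⟨?_, ?_, ?_⟩
    · show p ⟨(((b:ℕ) - t) % N + t) % N, _⟩ = 1
      have : (((b:ℕ) - t) % N + t) % N = (b:ℕ) := by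
        rw [hm, Nat.sub_add_cancel (by omega), Nat.mod_eq_of_lt b.isLt]
      simp_rw [this]
      simpa using h1
    · rw [hm]; omega
    · rw [hm]; omega
  · intro a ha
    simp only [Finset.mem_coe, Finset.mem_filter, Finset.mem_univ, true_and] at ha
    obtain ⟨h1, h2, h3⟩ := ha
    apply Fin.ext
    show (((a:ℕ) + t) % N - t) % N = (a:ℕ)
    rw [Nat.mod_eq_of_lt (show (a:ℕ) + t < N by omega), Nat.add_sub_cancel,
      Nat.mod_eq_of_lt a.isLt]
  · intro b hb
    simp only [Finset.mem_coe, Finset.mem_filter, Finset.mem_univ, true_and] at hb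
    obtain ⟨h1, h2, h3⟩ := hb
    apply Fin.ext
    show (((b:ℕ) - t) % N + t) % N = (b:ℕ)
    rw [Nat.mod_eq_of_lt (show (b:ℕ) - t < N by omega), Nat.sub_add_cancel (by omega),
      Nat.mod_eq_of_lt b.isLt]

lemma cnt_rot_wrap {N : ℕ} (hN : 0 < N) (t : ℕ) (p : Fin N → ℤ) {A B A' B' : ℕ}
    (ht : t ≤ N) (hA : A + t = N + A') (hB : B + t = N + B') (hB2 : B ≤ N) :
    cnt (rot hN t p) A B = cnt p A' B' := by
  unfold cnt
  apply Finset.card_nbij' (fun a : Fin N => (⟨((a:ℕ) + t) % N, Nat.mod_lt _ hN⟩ : Fin N))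
    (fun b : Fin N => (⟨((b:ℕ) + (N - t)) % N, Nat.mod_lt _ hN⟩ : Fin N))
  · intro a ha
    simp only [Finset.mem_coe, Finset.mem_filter, Finset.mem_univ, true_and] at ha ⊢
    obtain ⟨h1, h2, h3⟩ := ha
    have hm : ((a:ℕ) + t) % N = (a:ℕ) + t - N := by
      have hlt : (a:ℕ) + t < 2 * N := by have := a.isLt; omega
      rw [Nat.mod_eq_sub_mod (by omega), Nat.mod_eq_of_lt (by omega)]
    refine ⟨h1, ?_, ?_⟩ <;> rw [hm] <;> omega
  · intro b hb
    simp only [Finset.mem_coe, Finset.mem_filter, Finset.mem_univ, true_and] at hb ⊢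
    obtain ⟨h1, h2, h3⟩ := hb
    have hm : ((b:ℕ) + (N - t)) % N = (b:ℕ) + (N - t) := by
      apply Nat.mod_eq_of_lt; omega
    refine ⟨?_, ?_, ?_⟩
    · show p ⟨(((b:ℕ) + (N - t)) % N + t) % N, _⟩ = 1
      have : (((b:ℕ) + (N - t)) % N + t) % N = (b:ℕ) := by
        rw [hm]
        have : (b:ℕ) + (N - t) + t = (b:ℕ) + N := by omega
        rw [this, Nat.add_mod_right, Nat.mod_eq_of_lt b.isLt]
      simp_rw [this]
      simpa using h1
    · rw [hm]; omega
    · rw [hm]; omega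
  · intro a ha
    simp only [Finset.mem_coe, Finset.mem_filter, Finset.mem_univ, true_and] at ha
    obtain ⟨h1, h2, h3⟩ := ha
    apply Fin.ext
    show (((a:ℕ) + t) % N + (N - t)) % N = (a:ℕ)
    rw [Nat.mod_add_mod]
    have : (a:ℕ) + t + (N - t) = (a:ℕ) + N := by omega
    rw [this, Nat.add_mod_right, Nat.mod_eq_of_lt a.isLt]
  · intro b hb
    simp only [Finset.mem_coe, Finset.mem_filter, Finset.mem_univ, true_and] at hb
    obtain ⟨h1, h2, h3⟩ := hb
    apply Fin.ext
    show (((b:ℕ) + (N - t)) % N + t) % N = (b:ℕ)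
    rw [Nat.mod_add_mod]
    have : (b:ℕ) + (N - t) + t = (b:ℕ) + N := by omega
    rw [this, Nat.add_mod_right, Nat.mod_eq_of_lt b.isLt]

lemma blki_lt {r n : ℕ} {k : ℕ} (hk : k < n) (i : ℕ) (hi : i < r+1) : k*(r+1) + i < n*(r+1) := by
  have h1 : k*(r+1) + i < (k+1)*(r+1) := by
    rw [Nat.add_mul, Nat.one_mul]
    exact Nat.add_lt_add_left hi _
  exact lt_of_lt_of_le h1 (Nat.mul_le_mul_right _ hk)

lemma blk_lt {r n : ℕ} (k : Fin n) : (k:ℕ)*(r+1) < n*(r+1) := by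
  have := blki_lt (r := r) k.isLt 0 (Nat.succ_pos r)
  omega

/-- height (divided by r+1) before block k -/
def cP (r n : ℕ) (p : Fin (n*(r+1)) → ℤ) (k : ℕ) : ℤ :=
  (cnt p 0 (k*(r+1)) : ℤ) - r * k

/-- tie-breaking weight -/
def wP (r n : ℕ) (p : Fin (n*(r+1)) → ℤ) (k : Fin n) : ℤ :=
  n * cP r n p k - (k:ℕ)

/-- blocks whose first step is up -/
def Kset (r n : ℕ) (p : Fin (n*(r+1)) → ℤ) : Finset (Fin n) :=
  univ.filter (fun k => p ⟨(k:ℕ)*(r+1), blk_lt k⟩ = 1)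

def rank (r n : ℕ) (p : Fin (n*(r+1)) → ℤ) (k : Fin n) : ℕ :=
  ((Kset r n p).filter (fun k' => wP r n p k' ≤ wP r n p k)).card

def statB (r n : ℕ) (p : Fin (n*(r+1)) → ℤ) : ℕ :=
  ((Kset r n p).filter (fun k : Fin n => cP r n p (k:ℕ) ≤ 0)).card

lemma div_blk {r n : ℕ} (a : Fin (n*(r+1))) : (a:ℕ)/(r+1) < n :=
  (Nat.div_lt_iff_lt_mul (Nat.succ_pos r)).mpr a.isLt

/-- positions in class i correspond to blocks -/
lemma card_class_blocks {r n : ℕ} (p : Fin (n*(r+1)) → ℤ) (i : ℕ) (hi : i < r+1) :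
    (univ.filter (fun a : Fin (n*(r+1)) => p a = 1 ∧ (a:ℕ) % (r+1) = i)).card
    = (univ.filter (fun k : Fin n => p ⟨(k:ℕ)*(r+1) + i, blki_lt k.isLt i hi⟩ = 1)).card := by
  apply Finset.card_nbij' (fun a : Fin (n*(r+1)) => (⟨(a:ℕ)/(r+1), div_blk a⟩ : Fin n))
    (fun k : Fin n => (⟨(k:ℕ)*(r+1) + i, blki_lt k.isLt i hi⟩ : Fin (n*(r+1))))
  · intro a ha
    simp only [Finset.mem_coe, Finset.mem_filter, Finset.mem_univ, true_and] at ha ⊢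
    obtain ⟨h1, h2⟩ := ha
    have hval : (a:ℕ)/(r+1)*(r+1) + i = (a:ℕ) := by
      conv_rhs => rw [← Nat.div_add_mod (a:ℕ) (r+1)]
      rw [h2, Nat.mul_comm]
    have : (⟨(a:ℕ)/(r+1)*(r+1) + i, blki_lt (div_blk a) i hi⟩ : Fin (n*(r+1))) = a := Fin.ext hval
    rw [this]
    exact h1
  · intro k hk
    simp only [Finset.mem_coe, Finset.mem_filter, Finset.mem_univ, true_and] at hk ⊢
    refine ⟨hk, ?_⟩
    show ((k:ℕ)*(r+1) + i) % (r+1) = i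
    rw [Nat.add_comm, Nat.add_mul_mod_self_right, Nat.mod_eq_of_lt hi]
  · intro a ha
    simp only [Finset.mem_coe, Finset.mem_filter, Finset.mem_univ, true_and] at ha
    obtain ⟨h1, h2⟩ := ha
    apply Fin.ext
    show (a:ℕ)/(r+1)*(r+1) + i = (a:ℕ)
    conv_rhs => rw [← Nat.div_add_mod (a:ℕ) (r+1)]
    rw [h2, Nat.mul_comm]
  · intro k hk
    apply Fin.ext
    show ((k:ℕ)*(r+1) + i) / (r+1) = (k:ℕ)
    rw [Nat.add_comm, Nat.add_mul_div_right _ _ (Nat.succ_pos r), Nat.div_eq_of_lt hi]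
    omega

lemma card_Kset {r n : ℕ} {p : Fin (n*(r+1)) → ℤ} {m : Fin (r+1) → ℕ}
    (hcl : ∀ i : Fin (r+1), (univ.filter (fun a : Fin (n*(r+1)) =>
      p a = 1 ∧ (a:ℕ) % (r+1) = (i:ℕ))).card = m i) :
    (Kset r n p).card = m 0 := by
  have h := (hcl 0).symm.trans (card_class_blocks p 0 (Nat.succ_pos r))
  rw [h]
  unfold Kset
  have heq : (univ.filter (fun k : Fin n => p ⟨(k:ℕ)*(r+1), blk_lt k⟩ = 1))
      = (univ.filter (fun k : Fin n =>
          p ⟨(k:ℕ)*(r+1) + 0, blki_lt k.isLt 0 (Nat.succ_pos r)⟩ = 1)) := by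
    ext k
    simp only [Finset.mem_filter, Finset.mem_univ, true_and]
    have hfe : (⟨(k:ℕ)*(r+1) + 0, blki_lt k.isLt 0 (Nat.succ_pos r)⟩ : Fin (n*(r+1)))
        = ⟨(k:ℕ)*(r+1), blk_lt k⟩ := Fin.ext rfl
    rw [hfe]
  rw [heq]

lemma total_cnt {r n : ℕ} {p : Fin (n*(r+1)) → ℤ} {m : Fin (r+1) → ℕ}
    (hcl : ∀ i : Fin (r+1), (univ.filter (fun a : Fin (n*(r+1)) =>
      p a = 1 ∧ (a:ℕ) % (r+1) = (i:ℕ))).card = m i)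
    (hsum : ∑ i, m i = n*r + 1) :
    cnt p 0 (n*(r+1)) = n*r + 1 := by
  rw [cnt_top]
  have key : (univ.filter (fun a : Fin (n*(r+1)) => p a = 1)).card
      = ∑ i : Fin (r+1), (univ.filter (fun a : Fin (n*(r+1)) =>
          p a = 1 ∧ (a:ℕ) % (r+1) = (i:ℕ))).card := by
    rw [Finset.card_eq_sum_card_fiberwise
      (f := fun a : Fin (n*(r+1)) => (⟨(a:ℕ) % (r+1), Nat.mod_lt _ (Nat.succ_pos r)⟩ : Fin (r+1)))
      (t := univ) (fun a _ => Finset.mem_univ _)]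
    apply Finset.sum_congr rfl
    intro i _
    rw [Finset.filter_filter]
    congr 1
    apply Finset.filter_congr
    intro a _
    simp [Fin.ext_iff]
  rw [key]
  rw [Finset.sum_congr rfl (fun i _ => hcl i), hsum]

lemma psum_blk {r n : ℕ} {p : Fin (n*(r+1)) → ℤ} (hp : ∀ a, p a = 1 ∨ p a = -(r:ℤ))
    {k : ℕ} (hk : k ≤ n) :
    psum p (k*(r+1)) = (r+1) * cP r n p k := by
  rw [psum_eq p hp (Nat.mul_le_mul_right _ hk)]
  unfold cP
  push_cast
  ring

lemma psum_blk_nonpos {r n : ℕ} {p : Fin (n*(r+1)) → ℤ} (hp : ∀ a, p a = 1 ∨ p a = -(r:ℤ))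
    {k : ℕ} (hk : k ≤ n) :
    psum p (k*(r+1)) ≤ 0 ↔ cP r n p k ≤ 0 := by
  rw [psum_blk hp hk]
  constructor
  · intro h
    nlinarith [cP r n p k]
  · intro h
    have : (0:ℤ) < (r:ℤ)+1 := by positivity
    nlinarith

/-- the position-level statistic equals the block-level statistic -/
lemma statPos_eq_statB {r n : ℕ} (p : Fin (n*(r+1)) → ℤ) (hp : ∀ a, p a = 1 ∨ p a = -(r:ℤ)) :
    (univ.filter (fun a : Fin (n*(r+1)) =>
      p a = 1 ∧ (a:ℕ) % (r+1) = 0 ∧ psum p (a:ℕ) ≤ 0)).card = statB r n p := by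
  unfold statB Kset
  rw [Finset.filter_filter]
  apply Finset.card_nbij' (fun a : Fin (n*(r+1)) => (⟨(a:ℕ)/(r+1), div_blk a⟩ : Fin n))
    (fun k : Fin n => (⟨(k:ℕ)*(r+1), blk_lt k⟩ : Fin (n*(r+1))))
  · intro a ha
    simp only [Finset.mem_coe, Finset.mem_filter, Finset.mem_univ, true_and] at ha ⊢
    obtain ⟨h1, h2, h3⟩ := ha
    have hval : (a:ℕ)/(r+1)*(r+1) = (a:ℕ) :=
      Nat.div_mul_cancel (Nat.dvd_of_mod_eq_zero h2)
    constructor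
    · have hfe : (⟨(a:ℕ)/(r+1)*(r+1), blk_lt ⟨(a:ℕ)/(r+1), div_blk a⟩⟩ : Fin (n*(r+1))) = a :=
        Fin.ext hval
      rw [hfe]; exact h1
    · rw [← psum_blk_nonpos hp (le_of_lt (div_blk a))]
      rw [hval]
      exact h3
  · intro k hk
    simp only [Finset.mem_coe, Finset.mem_filter, Finset.mem_univ, true_and] at hk ⊢
    obtain ⟨h1, h2⟩ := hk
    refine ⟨h1, ?_, ?_⟩
    · show (k:ℕ)*(r+1) % (r+1) = 0
      simp [Nat.mul_mod_left]
    · show psum p ((k:ℕ)*(r+1)) ≤ 0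
      rw [psum_blk_nonpos hp (le_of_lt k.isLt)]
      exact h2
  · intro a ha
    simp only [Finset.mem_coe, Finset.mem_filter, Finset.mem_univ, true_and] at ha
    obtain ⟨h1, h2, h3⟩ := ha
    apply Fin.ext
    exact Nat.div_mul_cancel (Nat.dvd_of_mod_eq_zero h2)
  · intro k hk
    apply Fin.ext
    show (k:ℕ)*(r+1)/(r+1) = (k:ℕ)
    exact Nat.mul_div_cancel _ (Nat.succ_pos r)

/-- class counts are preserved by block rotations -/
lemma classcnt_rot {r n : ℕ} (hN : 0 < n*(r+1)) (p : Fin (n*(r+1)) → ℤ)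
    {t t' : ℕ} (hdvd : (r+1) ∣ t) (htt : t + t' = n*(r+1)) (i : ℕ) :
    (univ.filter (fun a : Fin (n*(r+1)) => rot hN t p a = 1 ∧ (a:ℕ) % (r+1) = i)).card
    = (univ.filter (fun a : Fin (n*(r+1)) => p a = 1 ∧ (a:ℕ) % (r+1) = i)).card := by
  have hNd : (r+1) ∣ n*(r+1) := dvd_mul_left (r+1) n
  have hdvd' : (r+1) ∣ t' := by
    have h2 := Nat.dvd_sub hNd hdvd
    rwa [show n*(r+1) - t = t' by omega] at h2
  have mod_round : ∀ (x s s' : ℕ), x < n*(r+1) → s + s' = n*(r+1) →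
      ((x + s) % (n*(r+1)) + s') % (n*(r+1)) = x := by
    intro x s s' hx hss
    rw [Nat.mod_add_mod, Nat.add_assoc, hss, Nat.add_mod_right, Nat.mod_eq_of_lt hx]
  have mod_res : ∀ (x s : ℕ), (r+1) ∣ s → ((x + s) % (n*(r+1))) % (r+1) = x % (r+1) := by
    intro x s hs
    rw [Nat.mod_mod_of_dvd _ hNd]
    obtain ⟨c, rfl⟩ := hs
    rw [Nat.mul_comm]
    exact Nat.add_mul_mod_self_right x c (r+1)
  apply Finset.card_nbij' (fun a : Fin (n*(r+1)) => (⟨((a:ℕ) + t) % (n*(r+1)), Nat.mod_lt _ hN⟩ : Fin (n*(r+1))))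
    (fun b : Fin (n*(r+1)) => (⟨((b:ℕ) + t') % (n*(r+1)), Nat.mod_lt _ hN⟩ : Fin (n*(r+1))))
  · intro a ha
    simp only [Finset.mem_coe, Finset.mem_filter, Finset.mem_univ, true_and] at ha ⊢
    obtain ⟨h1, h2⟩ := ha
    exact ⟨h1, by rw [mod_res _ _ hdvd]; exact h2⟩
  · intro b hb
    simp only [Finset.mem_coe, Finset.mem_filter, Finset.mem_univ, true_and] at hb ⊢
    obtain ⟨h1, h2⟩ := hb
    constructor
    · show p ⟨(((b:ℕ) + t') % (n*(r+1)) + t) % (n*(r+1)), _⟩ = 1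
      have := mod_round (b:ℕ) t' t b.isLt (by omega)
      simp_rw [this]
      simpa using h1
    · rw [mod_res _ _ hdvd']; exact h2
  · intro a ha
    apply Fin.ext
    exact mod_round (a:ℕ) t t' a.isLt htt
  · intro b hb
    apply Fin.ext
    exact mod_round (b:ℕ) t' t b.isLt (by omega)

lemma cP_rot_nowrap {r n : ℕ} (hN : 0 < n*(r+1)) (p : Fin (n*(r+1)) → ℤ)
    {k : Fin n} {k' : ℕ} {k'' : Fin n} (h : (k:ℕ) + k' = (k'':ℕ)) :
    cP r n (rot hN ((k:ℕ)*(r+1)) p) k' = cP r n p (k'':ℕ) - cP r n p (k:ℕ) := by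
  have hmul : k'*(r+1) + (k:ℕ)*(r+1) = (k'':ℕ)*(r+1) := by
    rw [← Nat.add_mul]
    congr 1
    omega
  have hw : cnt (rot hN ((k:ℕ)*(r+1)) p) 0 (k'*(r+1))
      = cnt p ((k:ℕ)*(r+1)) ((k'':ℕ)*(r+1)) := by
    apply cnt_rot_nowrap hN _ p (Nat.zero_add _) hmul
    exact le_of_lt (blk_lt k'')
  have hs : cnt p 0 ((k'':ℕ)*(r+1))
      = cnt p 0 ((k:ℕ)*(r+1)) + cnt p ((k:ℕ)*(r+1)) ((k'':ℕ)*(r+1)) :=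
    cnt_split p (Nat.zero_le _) (by omega)
  unfold cP
  rw [hw, hs]
  have hk : ((k:ℕ):ℤ) + (k':ℤ) = ((k'':ℕ):ℤ) := by exact_mod_cast h
  push_cast
  linear_combination (-(r:ℤ)) * hk

lemma cP_rot_wrap {r n : ℕ} (hN : 0 < n*(r+1)) (p : Fin (n*(r+1)) → ℤ)
    (htot : cnt p 0 (n*(r+1)) = n*r + 1)
    {k : Fin n} {k' : ℕ} {k'' : Fin n} (hk' : k' < n) (h : (k:ℕ) + k' = (k'':ℕ) + n) :
    cP r n (rot hN ((k:ℕ)*(r+1)) p) k' = cP r n p (k'':ℕ) - cP r n p (k:ℕ) + 1 := by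
  set t := (k:ℕ)*(r+1) with ht
  have hkn := k.isLt
  have hk''n := k''.isLt
  -- split point
  have hu : (n - (k:ℕ))*(r+1) ≤ k'*(r+1) := Nat.mul_le_mul_right _ (by omega)
  have hsplit : cnt (rot hN t p) 0 (k'*(r+1))
      = cnt (rot hN t p) 0 ((n - (k:ℕ))*(r+1)) + cnt (rot hN t p) ((n - (k:ℕ))*(r+1)) (k'*(r+1)) :=
    cnt_split _ (Nat.zero_le _) hu
  have h1 : cnt (rot hN t p) 0 ((n - (k:ℕ))*(r+1)) = cnt p t (n*(r+1)) := by
    apply cnt_rot_nowrap hN _ p (Nat.zero_add _) _ (le_refl _)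
    rw [← Nat.add_mul]
    congr 1
    omega
  have h2 : cnt (rot hN t p) ((n - (k:ℕ))*(r+1)) (k'*(r+1)) = cnt p 0 ((k'':ℕ)*(r+1)) := by
    apply cnt_rot_wrap hN _ p (le_of_lt (blk_lt k))
    · rw [← Nat.add_mul, Nat.add_zero]
      congr 1
      omega
    · rw [← Nat.add_mul]
      have : k' + (k:ℕ) = n + (k'':ℕ) := by omega
      rw [this, Nat.add_mul]
    · exact le_of_lt (blk_lt (⟨k', hk'⟩ : Fin n))
  have h3 : cnt p 0 t + cnt p t (n*(r+1)) = n*r + 1 := by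
    rw [← cnt_split p (Nat.zero_le _) (le_of_lt (blk_lt k))]
    exact htot
  unfold cP
  rw [hsplit, h1, h2]
  have hk : ((k:ℕ):ℤ) + (k':ℤ) = ((k'':ℕ):ℤ) + (n:ℤ) := by exact_mod_cast h
  have h3' : (cnt p 0 t : ℤ) + (cnt p t (n*(r+1)) : ℤ) = (n:ℤ)*(r:ℤ) + 1 := by exact_mod_cast h3
  push_cast
  linear_combination h3' - (r:ℤ) * hk

lemma warith1 {nn c c'' a b : ℤ} (h0 : 0 ≤ a) (hab : a ≤ b) (hbn : b < nn) :
    c'' ≤ c ↔ nn*c'' - b ≤ nn*c - a := by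
  constructor
  · intro h; nlinarith
  · intro h
    by_contra hc
    push_neg at hc
    nlinarith

lemma warith2 {nn c c'' a b : ℤ} (h0 : 0 ≤ b) (hba : b < a) (han : a < nn) :
    c'' < c ↔ nn*c'' - b ≤ nn*c - a := by
  constructor
  · intro h; nlinarith
  · intro h
    by_contra hc
    push_neg at hc
    nlinarith

lemma wP_inj {r n : ℕ} (p : Fin (n*(r+1)) → ℤ) : Function.Injective (wP r n p) := by
  intro k1 k2 h
  unfold wP at h
  have h1 : (n:ℤ) * (cP r n p (k1:ℕ) - cP r n p (k2:ℕ)) = (k1:ℕ) - (k2:ℕ) := by linarith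
  have h2 : ((n:ℤ)) ∣ ((k1:ℕ) : ℤ) - ((k2:ℕ) : ℤ) := ⟨_, h1.symm⟩
  have h3 : (((k1:ℕ):ℤ) - ((k2:ℕ):ℤ)).natAbs < ((n:ℤ)).natAbs := by
    have := k1.isLt; have := k2.isLt
    omega
  have h4 := Int.eq_zero_of_dvd_of_natAbs_lt_natAbs h2 h3
  apply Fin.ext
  omega

lemma stat_rot_eq_rank {r n : ℕ} (hn : 0 < n) (hN : 0 < n*(r+1)) {p : Fin (n*(r+1)) → ℤ}
    (htot : cnt p 0 (n*(r+1)) = n*r + 1) (k : Fin n) :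
    statB r n (rot hN ((k:ℕ)*(r+1)) p) = rank r n p k := by
  set q := rot hN ((k:ℕ)*(r+1)) p with hq
  have hkn := k.isLt
  -- Fact A: up steps transfer
  have factA : ∀ k' : Fin n, q ⟨(k':ℕ)*(r+1), blk_lt k'⟩
      = p ⟨((((k:ℕ)+(k':ℕ)) % n) : ℕ)*(r+1), blk_lt (⟨((k:ℕ)+(k':ℕ)) % n, Nat.mod_lt _ hn⟩ : Fin n)⟩ := by
    intro k'
    show p ⟨((k':ℕ)*(r+1) + (k:ℕ)*(r+1)) % (n*(r+1)), _⟩ = _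
    congr 1
    apply Fin.ext
    show ((k':ℕ)*(r+1) + (k:ℕ)*(r+1)) % (n*(r+1)) = (((k:ℕ)+(k':ℕ)) % n)*(r+1)
    rw [← Nat.add_mul, Nat.mul_mod_mul_right, Nat.add_comm (k':ℕ) (k:ℕ)]
  -- Fact B: heights transfer
  have factB : ∀ k' : Fin n, (cP r n q (k':ℕ) ≤ 0 ↔
      wP r n p (⟨((k:ℕ)+(k':ℕ)) % n, Nat.mod_lt _ hn⟩ : Fin n) ≤ wP r n p k) := by
    intro k'
    have hk'n := k'.isLt
    set k'' : Fin n := ⟨((k:ℕ)+(k':ℕ)) % n, Nat.mod_lt _ hn⟩ with hk''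
    by_cases hcase : (k:ℕ) + (k':ℕ) < n
    · have hv : (k'':ℕ) = (k:ℕ)+(k':ℕ) := Nat.mod_eq_of_lt hcase
      have hrot := cP_rot_nowrap hN p (k := k) (k' := (k':ℕ)) (k'' := k'') hv.symm
      rw [← hq] at hrot
      rw [hrot]
      unfold wP
      have harith := warith1 (nn := (n:ℤ)) (c := cP r n p (k:ℕ)) (c'' := cP r n p (k'':ℕ))
        (a := ((k:ℕ):ℤ)) (b := ((k'':ℕ):ℤ)) (by positivity) (by exact_mod_cast by omega)
        (by exact_mod_cast k''.isLt)
      constructor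
      · intro h; exact harith.mp (by linarith)
      · intro h; have := harith.mpr h; linarith
    · push_neg at hcase
      have hlt2 : (k:ℕ)+(k':ℕ) - n < n := by omega
      have hv : (k'':ℕ) = (k:ℕ)+(k':ℕ) - n := by
        show ((k:ℕ)+(k':ℕ)) % n = _
        rw [Nat.mod_eq_sub_mod hcase, Nat.mod_eq_of_lt hlt2]
      have hrot := cP_rot_wrap hN p htot (k := k) (k' := (k':ℕ)) (k'' := k'') hk'n (by omega)
      rw [← hq] at hrot
      rw [hrot]
      unfold wP
      have hk''k : (k'':ℕ) < (k:ℕ) := by omega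
      have harith := warith2 (nn := (n:ℤ)) (c := cP r n p (k:ℕ)) (c'' := cP r n p (k'':ℕ))
        (a := ((k:ℕ):ℤ)) (b := ((k'':ℕ):ℤ)) (by positivity) (by exact_mod_cast hk''k)
        (by exact_mod_cast hkn)
      constructor
      · intro h; exact harith.mp (by linarith)
      · intro h; have := harith.mpr h; linarith
  -- the bijection
  unfold statB rank Kset
  rw [Finset.filter_filter, Finset.filter_filter]
  apply Finset.card_nbij'
    (fun k' : Fin n => (⟨((k:ℕ)+(k':ℕ)) % n, Nat.mod_lt _ hn⟩ : Fin n))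
    (fun k'' : Fin n => (⟨((k'':ℕ) + (n - (k:ℕ))) % n, Nat.mod_lt _ hn⟩ : Fin n))
  · intro k' hk'
    simp only [Finset.mem_coe, Finset.mem_filter, Finset.mem_univ, true_and] at hk' ⊢
    obtain ⟨h1, h2⟩ := hk'
    constructor
    · rw [factA k'] at h1
      exact h1
    · exact (factB k').mp h2
  · intro k'' hk''
    simp only [Finset.mem_coe, Finset.mem_filter, Finset.mem_univ, true_and] at hk'' ⊢
    obtain ⟨h1, h2⟩ := hk''
    set k' : Fin n := ⟨((k'':ℕ) + (n - (k:ℕ))) % n, Nat.mod_lt _ hn⟩ with hk'def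
    have hcomp : (((k:ℕ) + (k':ℕ)) % n) = (k'':ℕ) := by
      show ((k:ℕ) + ((k'':ℕ) + (n - (k:ℕ))) % n) % n = (k'':ℕ)
      rw [Nat.add_comm (k:ℕ), Nat.mod_add_mod]
      have he : (k'':ℕ) + (n - (k:ℕ)) + (k:ℕ) = (k'':ℕ) + n := by omega
      rw [he, Nat.add_mod_right, Nat.mod_eq_of_lt k''.isLt]
    have hfe : (⟨((k:ℕ)+(k':ℕ)) % n, Nat.mod_lt _ hn⟩ : Fin n) = k'' := Fin.ext hcomp
    constructor
    · rw [factA k']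
      convert h1 using 2
      exact Fin.ext (by simp [hcomp])
    · rw [factB k', hfe]
      exact h2
  · intro k' _
    apply Fin.ext
    show (((k:ℕ) + (k':ℕ)) % n + (n - (k:ℕ))) % n = (k':ℕ)
    rw [Nat.mod_add_mod]
    have he : (k:ℕ) + (k':ℕ) + (n - (k:ℕ)) = (k':ℕ) + n := by omega
    rw [he, Nat.add_mod_right, Nat.mod_eq_of_lt k'.isLt]
  · intro k'' _
    apply Fin.ext
    show ((k:ℕ) + ((k'':ℕ) + (n - (k:ℕ))) % n) % n = (k'':ℕ)
    rw [Nat.add_comm (k:ℕ), Nat.mod_add_mod]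
    have he : (k'':ℕ) + (n - (k:ℕ)) + (k:ℕ) = (k'':ℕ) + n := by omega
    rw [he, Nat.add_mod_right, Nat.mod_eq_of_lt k''.isLt]

lemma count_le_orderIso (s : Finset ℤ) (i : Fin s.card) :
    (s.filter (fun x => x ≤ ((s.orderIsoOfFin rfl i : ℤ)))).card = (i:ℕ) + 1 := by
  have hpos : 0 < s.card := i.pos
  have hcard : (univ.filter (fun i' : Fin s.card => (i':ℕ) < (i:ℕ)+1)).card = (i:ℕ)+1 :=
    card_val_lt i.isLt
  rw [← hcard]
  apply Finset.card_nbij'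
    (fun x : ℤ => if hx : x ∈ s then s.orderIsoOfFin rfl |>.symm ⟨x, hx⟩ else ⟨0, hpos⟩)
    (fun i' : Fin s.card => ((s.orderIsoOfFin rfl i' : ℤ)))
  · intro x hx
    simp only [Finset.mem_coe, Finset.mem_filter, Finset.mem_univ, true_and] at hx ⊢
    obtain ⟨h1, h2⟩ := hx
    rw [dif_pos h1]
    have hle : (⟨x, h1⟩ : {y // y ∈ s}) ≤ s.orderIsoOfFin rfl i := Subtype.mk_le_mk.mpr h2
    have h3 : (s.orderIsoOfFin rfl).symm ⟨x, h1⟩ ≤ i := by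
      have h4 := (s.orderIsoOfFin rfl).symm.monotone hle
      simpa using h4
    rw [Fin.le_def] at h3
    omega
  · intro i' hi'
    simp only [Finset.mem_coe, Finset.mem_filter, Finset.mem_univ, true_and] at hi' ⊢
    refine ⟨Finset.coe_mem _, ?_⟩
    have h5 : i' ≤ i := by rw [Fin.le_def]; omega
    exact Subtype.mk_le_mk.mp ((s.orderIsoOfFin rfl).monotone h5)
  · intro x hx
    simp only [Finset.mem_coe, Finset.mem_filter, Finset.mem_univ, true_and] at hx
    dsimp only
    rw [dif_pos hx.1]
    simp
  · intro i' hi'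
    dsimp only
    rw [dif_pos (Finset.coe_mem _)]
    have : (⟨((s.orderIsoOfFin rfl i' : ℤ)), Finset.coe_mem _⟩ : {y // y ∈ s})
        = s.orderIsoOfFin rfl i' := Subtype.ext rfl
    rw [this]
    simp

lemma exists_unique_le_count (s : Finset ℤ) (j : ℕ) (h1 : 1 ≤ j) (h2 : j ≤ s.card) :
    ∃! x : ℤ, x ∈ s ∧ (s.filter (fun y => y ≤ x)).card = j := by
  have hj : j - 1 < s.card := by omega
  refine ⟨((s.orderIsoOfFin rfl ⟨j-1, hj⟩ : ℤ)), ⟨Finset.coe_mem _, ?_⟩, ?_⟩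
  · rw [count_le_orderIso]
    simp
    omega
  · rintro x ⟨hxs, hxc⟩
    have hx : x = ((s.orderIsoOfFin rfl ((s.orderIsoOfFin rfl).symm ⟨x, hxs⟩) : ℤ)) := by simp
    rw [hx] at hxc
    rw [count_le_orderIso] at hxc
    have heq : (s.orderIsoOfFin rfl).symm ⟨x, hxs⟩ = ⟨j-1, hj⟩ := by
      apply Fin.ext
      show (((s.orderIsoOfFin rfl).symm ⟨x, hxs⟩ : Fin s.card) : ℕ) = j - 1
      omega
    rw [hx, heq]

lemma rank_eq_image_count {r n : ℕ} (p : Fin (n*(r+1)) → ℤ) (k : Fin n) :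
    rank r n p k = (((Kset r n p).image (wP r n p)).filter (fun y => y ≤ wP r n p k)).card := by
  unfold rank
  rw [Finset.filter_image]
  rw [Finset.card_image_of_injective _ (wP_inj p)]

lemma exists_unique_rank {r n : ℕ} (p : Fin (n*(r+1)) → ℤ) (j : ℕ)
    (h1 : 1 ≤ j) (h2 : j ≤ (Kset r n p).card) :
    ∃! k : Fin n, k ∈ Kset r n p ∧ rank r n p k = j := by
  set s := (Kset r n p).image (wP r n p) with hs
  have hcard : s.card = (Kset r n p).card := Finset.card_image_of_injective _ (wP_inj p)
  obtain ⟨x, ⟨hxs, hxc⟩, huniq⟩ := exists_unique_le_count s j h1 (by omega)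
  obtain ⟨k0, hk0K, hk0x⟩ := Finset.mem_image.mp hxs
  refine ⟨k0, ⟨hk0K, ?_⟩, ?_⟩
  · rw [rank_eq_image_count, ← hs, hk0x]
    exact hxc
  · rintro k ⟨hkK, hkr⟩
    have hwk : wP r n p k = x := by
      apply huniq
      refine ⟨Finset.mem_image_of_mem _ hkK, ?_⟩
      rw [← rank_eq_image_count]
      exact hkr
    exact wP_inj p (hwk.trans hk0x.symm)

def BaseP (r n : ℕ) (m : Fin (r+1) → ℕ) (p : Fin (n*(r+1)) → ℤ) : Prop :=
  (∀ a, p a = 1 ∨ p a = -(r : ℤ)) ∧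
  (∀ i : Fin (r+1),
    (univ.filter (fun a : Fin (n*(r+1)) =>
      p a = 1 ∧ (a : ℕ) % (r+1) = (i : ℕ))).card = m i)

lemma amod_lt {r n : ℕ} (a : Fin (n*(r+1))) : (a:ℕ) % (r+1) < r+1 := Nat.mod_lt _ (Nat.succ_pos r)

/-- reconstruct a path from its per-class up-sets -/
def fromSets (r n : ℕ) (F : ∀ _ : Fin (r+1), Finset (Fin n)) : Fin (n*(r+1)) → ℤ :=
  fun a => if (⟨(a:ℕ)/(r+1), div_blk a⟩ : Fin n) ∈ F ⟨(a:ℕ) % (r+1), amod_lt a⟩ then 1 else -(r:ℤ)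

lemma hdiv_idx {r n : ℕ} (k : Fin n) {i : ℕ} (hi : i < r+1) : ((k:ℕ)*(r+1)+i)/(r+1) = (k:ℕ) := by
  rw [Nat.add_comm, Nat.add_mul_div_right _ _ (Nat.succ_pos r), Nat.div_eq_of_lt hi]
  omega

lemma hmod_idx {r n : ℕ} (k : Fin n) {i : ℕ} (hi : i < r+1) : ((k:ℕ)*(r+1)+i) % (r+1) = i := by
  rw [Nat.add_comm, Nat.add_mul_mod_self_right, Nat.mod_eq_of_lt hi]

lemma fromSets_blocks {r n : ℕ} (F : ∀ _ : Fin (r+1), Finset (Fin n)) (k : Fin n) (i : Fin (r+1)) :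
    (fromSets r n F ⟨(k:ℕ)*(r+1)+(i:ℕ), blki_lt k.isLt _ i.isLt⟩ = 1 ↔ k ∈ F i) := by
  set A : Fin (n*(r+1)) := ⟨(k:ℕ)*(r+1)+(i:ℕ), blki_lt k.isLt _ i.isLt⟩ with hA
  have e1 : (⟨(A:ℕ)/(r+1), div_blk A⟩ : Fin n) = k := Fin.ext (hdiv_idx k i.isLt)
  have e2 : (⟨(A:ℕ) % (r+1), amod_lt A⟩ : Fin (r+1)) = i := Fin.ext (hmod_idx k i.isLt)
  unfold fromSets
  rw [e1, e2]
  by_cases hm : k ∈ F i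
  · simp [hm]
  · rw [if_neg hm]
    simp only [hm, iff_false]
    intro hcon
    omega

lemma fromSets_base {r n : ℕ} (m : Fin (r+1) → ℕ)
    (F : ∀ i : Fin (r+1), {S : Finset (Fin n) // S.card = m i}) :
    BaseP r n m (fromSets r n (fun i => (F i).1)) := by
  constructor
  · intro a
    unfold fromSets
    split <;> simp
  · intro i
    rw [card_class_blocks _ (i:ℕ) i.isLt]
    have heq : (univ.filter (fun k : Fin n =>
        fromSets r n (fun i' => (F i').1) ⟨(k:ℕ)*(r+1)+(i:ℕ), blki_lt k.isLt _ i.isLt⟩ = 1))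
        = (F i).1 := by
      ext k
      simp only [Finset.mem_filter, Finset.mem_univ, true_and]
      exact fromSets_blocks _ k i
    rw [heq, (F i).2]

lemma card_BaseP (r n : ℕ) (m : Fin (r+1) → ℕ) :
    Nat.card {p : Fin (n*(r+1)) → ℤ // BaseP r n m p}
      = ∏ i : Fin (r+1), Nat.choose n (m i) := by
  classical
  let E : {p : Fin (n*(r+1)) → ℤ // BaseP r n m p} ≃
      (∀ i : Fin (r+1), {S : Finset (Fin n) // S.card = m i}) :=
  { toFun := fun P i =>
      ⟨univ.filter (fun k : Fin n => P.1 ⟨(k:ℕ)*(r+1)+(i:ℕ), blki_lt k.isLt _ i.isLt⟩ = 1),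
        (card_class_blocks P.1 (i:ℕ) i.isLt).symm.trans (P.2.2 i)⟩
    invFun := fun F => ⟨fromSets r n (fun i => (F i).1), fromSets_base m F⟩
    left_inv := by
      rintro ⟨p, hp⟩
      apply Subtype.ext
      funext a
      show fromSets r n (fun i => (univ.filter (fun k : Fin n =>
        p ⟨(k:ℕ)*(r+1)+(i:ℕ), blki_lt k.isLt _ i.isLt⟩ = 1))) a = p a
      unfold fromSets
      simp only [Finset.mem_filter, Finset.mem_univ, true_and]
      have he : ∀ (h : (a:ℕ)/(r+1)*(r+1)+(a:ℕ) % (r+1) < n*(r+1)),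
          (⟨(a:ℕ)/(r+1)*(r+1)+(a:ℕ) % (r+1), h⟩ : Fin (n*(r+1))) = a := by
        intro h
        apply Fin.ext
        show (a:ℕ)/(r+1)*(r+1)+(a:ℕ) % (r+1) = (a:ℕ)
        rw [Nat.mul_comm]
        exact Nat.div_add_mod _ _
      simp only [he]
      rcases hp.1 a with h | h
      · rw [if_pos h, h]
      · rw [if_neg (by rw [h]; intro hcon; omega), h]
    right_inv := by
      intro F
      funext i
      apply Subtype.ext
      show (univ.filter (fun k : Fin n =>
        fromSets r n (fun i' => (F i').1) ⟨(k:ℕ)*(r+1)+(i:ℕ), blki_lt k.isLt _ i.isLt⟩ = 1))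
        = (F i).1
      ext k
      simp only [Finset.mem_filter, Finset.mem_univ, true_and]
      exact fromSets_blocks _ k i }
  rw [Nat.card_congr E, Nat.card_pi]
  apply Finset.prod_congr rfl
  intro i _
  rw [Nat.card_eq_fintype_card, Fintype.card_finset_len, Fintype.card_fin]

def BasedP (r n : ℕ) (hN : 0 < n*(r+1)) (m : Fin (r+1) → ℕ) (j : ℕ)
    (p : Fin (n*(r+1)) → ℤ) : Prop :=
  BaseP r n m p ∧ p ⟨0, hN⟩ = 1 ∧
  (univ.filter (fun a : Fin (n*(r+1)) =>
    p a = 1 ∧ (a : ℕ) % (r+1) = 0 ∧ psum p (a : ℕ) ≤ 0)).card = j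

def PairP (r n : ℕ) (m : Fin (r+1) → ℕ) (j : ℕ) (x : (Fin (n*(r+1)) → ℤ) × Fin n) : Prop :=
  BaseP r n m x.1 ∧ x.2 ∈ Kset r n x.1 ∧ rank r n x.1 x.2 = j

lemma pair_iff {r n : ℕ} (hn : 0 < n) (hN : 0 < n*(r+1)) (m : Fin (r+1) → ℕ)
    (hsum : ∑ i, m i = n*r + 1) (j : ℕ) (p : Fin (n*(r+1)) → ℤ) (k : Fin n) :
    PairP r n m j (p, k) ↔ BasedP r n hN m j (rot hN ((k:ℕ)*(r+1)) p) := by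
  have hkn := k.isLt
  have htt : (k:ℕ)*(r+1) + (n-(k:ℕ))*(r+1) = n*(r+1) := by
    rw [← Nat.add_mul]
    congr 1
    omega
  have hdvd1 : (r+1) ∣ (k:ℕ)*(r+1) := dvd_mul_left _ _
  have hdvd2 : (r+1) ∣ (n-(k:ℕ))*(r+1) := dvd_mul_left _ _
  have hzero : ((0:ℕ) + (k:ℕ)*(r+1)) % (n*(r+1)) = (k:ℕ)*(r+1) := by
    rw [Nat.zero_add, Nat.mod_eq_of_lt (blk_lt k)]
  constructor
  · rintro ⟨hbase, hkK, hrank⟩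
    have htot : cnt p 0 (n*(r+1)) = n*r + 1 := total_cnt hbase.2 hsum
    refine ⟨⟨rot_steps hN _ hbase.1, ?_⟩, ?_, ?_⟩
    · intro i
      rw [classcnt_rot hN p hdvd1 htt (i:ℕ)]
      exact hbase.2 i
    · show p ⟨((0:ℕ) + (k:ℕ)*(r+1)) % (n*(r+1)), _⟩ = 1
      have hfe : (⟨((0:ℕ) + (k:ℕ)*(r+1)) % (n*(r+1)), Nat.mod_lt _ hN⟩ : Fin (n*(r+1)))
          = ⟨(k:ℕ)*(r+1), blk_lt k⟩ := Fin.ext hzero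
      rw [hfe]
      exact Finset.mem_filter.mp hkK |>.2
    · rw [statPos_eq_statB _ (rot_steps hN _ hbase.1)]
      rw [stat_rot_eq_rank hn hN htot k]
      exact hrank
  · rintro ⟨hbaseq, h0, hstat⟩
    set q := rot hN ((k:ℕ)*(r+1)) p with hq
    have hpq : rot hN ((n-(k:ℕ))*(r+1)) q = p := rot_inv hN htt p
    have hbase : BaseP r n m p := by
      constructor
      · intro a
        rw [← hpq]
        exact rot_steps hN _ hbaseq.1 a
      · intro i
        rw [← hpq, classcnt_rot hN q hdvd2 (t' := (k:ℕ)*(r+1))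
          (by rw [← Nat.add_mul]; congr 1; omega) (i:ℕ)]
        exact hbaseq.2 i
    have htot : cnt p 0 (n*(r+1)) = n*r + 1 := total_cnt hbase.2 hsum
    have hkK : k ∈ Kset r n p := by
      unfold Kset
      rw [Finset.mem_filter]
      refine ⟨Finset.mem_univ _, ?_⟩
      rw [← hpq]
      show q ⟨((k:ℕ)*(r+1) + (n-(k:ℕ))*(r+1)) % (n*(r+1)), _⟩ = 1
      have hfe : (⟨((k:ℕ)*(r+1) + (n-(k:ℕ))*(r+1)) % (n*(r+1)), Nat.mod_lt _ hN⟩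
          : Fin (n*(r+1))) = ⟨0, hN⟩ := by
        apply Fin.ext
        show ((k:ℕ)*(r+1) + (n-(k:ℕ))*(r+1)) % (n*(r+1)) = 0
        rw [htt, Nat.mod_self]
      rw [hfe]
      exact h0
    refine ⟨hbase, hkK, ?_⟩
    rw [← stat_rot_eq_rank hn hN htot k, ← hq]
    rw [← statPos_eq_statB q (hbaseq.1)]
    exact hstat

end GN

set_option linter.unusedVariables false in
open GN in
/-- Among paths in 𝒫(n−1,r,r+1) (length n(r+1), with nr+1 up steps and n−1 down
steps, each down step −r) starting with an up step and having exactly `m i` up steps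
in positions congruent to `i` modulo `r+1` for each `i = 0,…,r` (positions are
0-indexed), for each `1 ≤ j ≤ m 0` the number of such paths with exactly `j` up
steps in positions ≡ 0 (mod r+1) starting on or below the x-axis is
`(1/m₀)·C(n−1, m₀−1)·∏_{i=1}^{r} C(n, m i)`; in particular it is independent of `j`. -/
theorem generalized_narayana_congruence (r n : ℕ) (hr : 1 ≤ r) (hn : 1 ≤ n)
    (m : Fin (r+1) → ℕ) (hm0 : 1 ≤ m 0) (hsum : ∑ i, m i = n*r + 1)
    (j : ℕ) (hj1 : 1 ≤ j) (hj2 : j ≤ m 0) :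
    Nat.card {p : Fin (n*(r+1)) → ℤ //
      (∀ i, p i = 1 ∨ p i = -(r : ℤ)) ∧
      (univ.filter (fun i => p i = 1)).card = n*r + 1 ∧
      p ⟨0, Nat.mul_pos hn (Nat.succ_pos r)⟩ = 1 ∧
      (∀ i : Fin (r+1),
        (univ.filter (fun a : Fin (n*(r+1)) =>
          p a = 1 ∧ (a : ℕ) % (r+1) = (i : ℕ))).card = m i) ∧
      (univ.filter (fun a : Fin (n*(r+1)) =>
        p a = 1 ∧ (a : ℕ) % (r+1) = 0 ∧ psum p (a : ℕ) ≤ 0)).card = j }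
      * (m 0) = Nat.choose (n-1) (m 0 - 1) *
        ∏ i ∈ univ.filter (fun i : Fin (r+1) => i ≠ 0), Nat.choose n (m i) := by
  
  classical
  have hN : 0 < n*(r+1) := Nat.mul_pos hn (Nat.succ_pos r)
  -- step 1: identify the set with the `BasedP` set
  have e0 : {p : Fin (n*(r+1)) → ℤ //
      (∀ i, p i = 1 ∨ p i = -(r : ℤ)) ∧
      (univ.filter (fun i => p i = 1)).card = n*r + 1 ∧
      p ⟨0, Nat.mul_pos hn (Nat.succ_pos r)⟩ = 1 ∧
      (∀ i : Fin (r+1),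
        (univ.filter (fun a : Fin (n*(r+1)) =>
          p a = 1 ∧ (a : ℕ) % (r+1) = (i : ℕ))).card = m i) ∧
      (univ.filter (fun a : Fin (n*(r+1)) =>
        p a = 1 ∧ (a : ℕ) % (r+1) = 0 ∧ psum p (a : ℕ) ≤ 0)).card = j }
      ≃ {p : Fin (n*(r+1)) → ℤ // BasedP r n hN m j p} := by
    apply Equiv.subtypeEquivRight
    intro p
    constructor
    · rintro ⟨h1, _, h3, h4, h5⟩
      exact ⟨⟨h1, h4⟩, h3, h5⟩
    · rintro ⟨⟨h1, h4⟩, h3, h5⟩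
      refine ⟨h1, ?_, h3, h4, h5⟩
      rw [← cnt_top]
      exact total_cnt h4 hsum
  -- step 2: pairs, two ways
  have e1 : {x : (Fin (n*(r+1)) → ℤ) × Fin n // PairP r n m j x}
      ≃ {p : Fin (n*(r+1)) → ℤ // BaseP r n m p} := by
    apply Equiv.ofBijective (fun x => ⟨x.1.1, x.2.1⟩)
    constructor
    · rintro ⟨⟨p1, k1⟩, hx⟩ ⟨⟨p2, k2⟩, hy⟩ h
      have hp : p1 = p2 := congrArg Subtype.val h
      subst hp
      obtain ⟨k0, -, huniq⟩ := exists_unique_rank p1 j hj1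
        (by rw [card_Kset hx.1.2]; exact hj2)
      have h1 := huniq k1 ⟨hx.2.1, hx.2.2⟩
      have h2 := huniq k2 ⟨hy.2.1, hy.2.2⟩
      apply Subtype.ext
      exact Prod.ext rfl (h1.trans h2.symm)
    · rintro ⟨p, hp⟩
      obtain ⟨k0, hk0, -⟩ := exists_unique_rank p j hj1
        (by rw [card_Kset hp.2]; exact hj2)
      exact ⟨⟨(p, k0), hp, hk0.1, hk0.2⟩, rfl⟩
  have e2 : {x : (Fin (n*(r+1)) → ℤ) × Fin n // PairP r n m j x}
      ≃ {p : Fin (n*(r+1)) → ℤ // BasedP r n hN m j p} × Fin n :=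
  { toFun := fun x => (⟨rot hN ((x.1.2:ℕ)*(r+1)) x.1.1,
      (pair_iff hn hN m hsum j x.1.1 x.1.2).mp x.2⟩, x.1.2)
    invFun := fun y => ⟨(rot hN ((n-(y.2:ℕ))*(r+1)) y.1.1, y.2),
      (pair_iff hn hN m hsum j _ y.2).mpr (by
        have hrr : rot hN ((y.2:ℕ)*(r+1)) (rot hN ((n-(y.2:ℕ))*(r+1)) y.1.1) = y.1.1 :=
          rot_inv hN (by rw [← Nat.add_mul]; congr 1; have := y.2.isLt; omega) _
        rw [hrr]
        exact y.1.2)⟩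
    left_inv := by
      rintro ⟨⟨p, k⟩, hx⟩
      apply Subtype.ext
      have hrot : rot hN ((n-(k:ℕ))*(r+1)) (rot hN ((k:ℕ)*(r+1)) p) = p :=
        rot_inv hN (by rw [← Nat.add_mul]; congr 1; have := k.isLt; omega) p
      show (rot hN ((n-(k:ℕ))*(r+1)) (rot hN ((k:ℕ)*(r+1)) p), k) = (p, k)
      rw [hrot]
    right_inv := by
      rintro ⟨⟨q, hq⟩, k⟩
      have hrot : rot hN ((k:ℕ)*(r+1)) (rot hN ((n-(k:ℕ))*(r+1)) q) = q :=
        rot_inv hN (by rw [← Nat.add_mul]; congr 1; have := k.isLt; omega) q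
      simp only [Prod.mk.injEq]
      exact ⟨Subtype.ext hrot, trivial⟩ }
  -- step 3: counting
  have c1 : Nat.card {x : (Fin (n*(r+1)) → ℤ) × Fin n // PairP r n m j x}
      = ∏ i : Fin (r+1), Nat.choose n (m i) :=
    (Nat.card_congr e1).trans (card_BaseP r n m)
  have c2 : Nat.card {x : (Fin (n*(r+1)) → ℤ) × Fin n // PairP r n m j x}
      = Nat.card {p : Fin (n*(r+1)) → ℤ // BasedP r n hN m j p} * n := by
    rw [Nat.card_congr e2, Nat.card_prod, Nat.card_eq_fintype_card (α := Fin n), Fintype.card_fin]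
  rw [Nat.card_congr e0]
  set X := Nat.card {p : Fin (n*(r+1)) → ℤ // BasedP r n hN m j p} with hX
  have hXn : X * n = ∏ i : Fin (r+1), Nat.choose n (m i) := by rw [← c2, c1]
  have hprod : ∏ i : Fin (r+1), Nat.choose n (m i)
      = Nat.choose n (m 0) * ∏ i ∈ univ.filter (fun i : Fin (r+1) => i ≠ 0),
          Nat.choose n (m i) := by
    rw [Finset.filter_ne']
    exact (Finset.mul_prod_erase univ _ (Finset.mem_univ 0)).symm
  have h5 : n * Nat.choose (n-1) (m 0 - 1) = Nat.choose n (m 0) * m 0 := by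
    have h := Nat.add_one_mul_choose_eq (n-1) (m 0 - 1)
    have he1 : n - 1 + 1 = n := by omega
    have he2 : m 0 - 1 + 1 = m 0 := by omega
    rw [he1, he2] at h
    exact h
  apply Nat.eq_of_mul_eq_mul_left (show 0 < n from hn)
  calc n * (X * m 0) = (X * n) * m 0 := by ring
    _ = (Nat.choose n (m 0) * ∏ i ∈ univ.filter (fun i : Fin (r+1) => i ≠ 0),
          Nat.choose n (m i)) * m 0 := by rw [hXn, hprod]
    _ = (n * Nat.choose (n-1) (m 0 - 1))
          * ∏ i ∈ univ.filter (fun i : Fin (r+1) => i ≠ 0), Nat.choose n (m i) := by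
        rw [h5]; ring
    _ = n * (Nat.choose (n-1) (m 0 - 1)
          * ∏ i ∈ univ.filter (fun i : Fin (r+1) => i ≠ 0), Nat.choose n (m i)) := by ring
end
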